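/- arXiv:1601.06893 — 6 statements merged into one kernel-verified Lean document; each statement's English description precedes it below -/
import Mathlib

section
/- If X ⊆ ℝⁿ is closed, convex, ray-like, and does not contain the origin, then the antipolar of the antipolar of X equals X, i.e., X'' = X. -/
open scoped RealInnerProductSpace

/-- The antipolar of a set X ⊆ ℝⁿ: X' = {y : ⟨x,y⟩ ≥ 1 for all x ∈ X}. -/
def antipolar {n : ℕ} (X : Set (EuclideanSpace ℝ (Fin n))) : Set (EuclideanSpace ℝ (Fin n)) :=
  {y | ∀ x ∈ X, 1 ≤ (⟪x, y⟫ : ℝ)}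

theorem antipolar_antipolar {n : ℕ} (X : Set (EuclideanSpace ℝ (Fin n)))
    (hclosed : IsClosed X) (hconv : Convex ℝ X)
    (hray : ∀ x ∈ X, ∀ y ∈ X, ∀ θ : ℝ, 0 ≤ θ → x + θ • y ∈ X)
    (h0 : (0 : EuclideanSpace ℝ (Fin n)) ∉ X) :
    antipolar (antipolar X) = X := by
  apply Set.Subset.antisymm
  · intro z hz
    by_contra hzX
    rcases Set.eq_empty_or_nonempty X with hXe | ⟨x0, hx0⟩
    · have h := hz 0 (by intro x hx; rw [hXe] at hx; exact absurd hx (Set.notMem_empty x))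
      simp [inner_zero_left] at h
      linarith
    · obtain ⟨f, u, hfz, hfX⟩ := geometric_hahn_banach_point_closed hconv hclosed hzX
      obtain ⟨g, d, hg0, hgX⟩ := geometric_hahn_banach_point_closed hconv hclosed h0
      have hd : 0 < d := by simpa using hg0
      -- f is nonnegative on X by ray-likeness
      have hfnn : ∀ x ∈ X, 0 ≤ f x := by
        intro x hx
        by_contra hneg
        push_neg at hneg
        have hfx0 : u < f x0 := hfX x0 hx0
        set θ := (f x0 - u + 1) / (-f x) with hθ
        have hθpos : 0 < θ := div_pos (by linarith) (by linarith)
        have hmem := hray x0 hx0 x hx θ hθpos.le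
        have h2 := hfX _ hmem
        rw [map_add, map_smul] at h2
        simp only [smul_eq_mul, hθ] at h2
        have hfxne : -f x ≠ 0 := by linarith
        rw [div_mul_eq_mul_div] at h2
        have : (f x0 - u + 1) * f x / (-f x) = -(f x0 - u + 1) := by
          rw [div_neg, mul_div_assoc, div_self hneg.ne, mul_one]
        rw [this] at h2
        linarith
      set v := (InnerProductSpace.toDual ℝ (EuclideanSpace ℝ (Fin n))).symm f with hv
      set w := (InnerProductSpace.toDual ℝ (EuclideanSpace ℝ (Fin n))).symm g with hw
      have hvx : ∀ x : EuclideanSpace ℝ (Fin n), (⟪x, v⟫ : ℝ) = f x := by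
        intro x
        rw [real_inner_comm, hv, InnerProductSpace.toDual_symm_apply]
      have hwx : ∀ x : EuclideanSpace ℝ (Fin n), (⟪x, w⟫ : ℝ) = g x := by
        intro x
        rw [real_inner_comm, hw, InnerProductSpace.toDual_symm_apply]
      rcases lt_or_ge 0 u with hu | hu
      · -- use y = u⁻¹ • v
        have hy : u⁻¹ • v ∈ antipolar X := by
          intro x hx
          rw [inner_smul_right, hvx]
          calc (1 : ℝ) = u⁻¹ * u := (inv_mul_cancel₀ hu.ne').symm
          _ ≤ u⁻¹ * f x := mul_le_mul_of_nonneg_left (hfX x hx).le (by positivity)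
        have h1 := hz _ hy
        rw [real_inner_comm, inner_smul_right, hvx] at h1
        have : u⁻¹ * f z < u⁻¹ * u := by
          apply mul_lt_mul_of_pos_left hfz (by positivity)
        rw [inv_mul_cancel₀ hu.ne'] at this
        linarith
      · -- u ≤ 0, so f z < 0
        have hfzneg : f z < 0 := lt_of_lt_of_le hfz hu
        set t := max ((g z / d) / (-f z)) 0 with ht
        have htnn : 0 ≤ t := le_max_right _ _
        set y := d⁻¹ • w + t • v with hy
        have hymem : y ∈ antipolar X := by
          intro x hx
          rw [hy, inner_add_right, inner_smul_right, inner_smul_right, hvx, hwx]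
          have h3 : d < g x := hgX x hx
          have h4 : 0 ≤ f x := hfnn x hx
          have h5 : (1 : ℝ) ≤ d⁻¹ * g x := by
            rw [← inv_mul_cancel₀ hd.ne']
            apply mul_le_mul_of_nonneg_left h3.le (by positivity)
          nlinarith [mul_nonneg htnn h4]
        have h1 := hz _ hymem
        rw [real_inner_comm, hy, inner_add_right, inner_smul_right, inner_smul_right,
          hvx, hwx] at h1
        have ht1 : (g z / d) / (-f z) ≤ t := le_max_left _ _
        have h6 : t * f z ≤ ((g z / d) / (-f z)) * f z := by
          apply mul_le_mul_of_nonpos_right ht1 hfzneg.le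
        have h7 : ((g z / d) / (-f z)) * f z = -(g z / d) := by
          have hne : f z ≠ 0 := hfzneg.ne
          field_simp
        rw [h7] at h6
        have h8 : d⁻¹ * g z = g z / d := by ring
        linarith [h1, h6, h8.symm ▸ h6]
  · intro x hx y hy
    exact (real_inner_comm x y) ▸ hy x hx
end

section
/- Von Neumann's trace inequality: for any real m×n matrices X and Y, ⟨X,Y⟩ = trace(XᵀY) ≤ ⟨σ(X), σ(Y)⟩, where σ(·) is the vector of singular values in nonincreasing order. -/
open Matrix

/-- The m×n rectangular "diagonal" matrix with entries `s 0, s 1, …` on the diagonal. -/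
def svdDiagMat (m n : ℕ) (s : ℕ → ℝ) : Matrix (Fin m) (Fin n) ℝ :=
  Matrix.of fun i j => if (i : ℕ) = (j : ℕ) then s (i : ℕ) else 0

/-- `s` lists the singular values of `X` in nonincreasing order (padded by zeros from index
`min m n` on), as witnessed by a singular value decomposition `X = U D Vᵀ` with `U, V`
orthonormal. -/
def IsOrderedSVD {m n : ℕ} (X : Matrix (Fin m) (Fin n) ℝ) (s : ℕ → ℝ) : Prop :=
  Antitone s ∧ (∀ i, 0 ≤ s i) ∧ (∀ i, min m n ≤ i → s i = 0) ∧
  ∃ (U : Matrix (Fin m) (Fin m) ℝ) (V : Matrix (Fin n) (Fin n) ℝ),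
    U * Uᵀ = 1 ∧ V * Vᵀ = 1 ∧ X = U * svdDiagMat m n s * Vᵀ

/-- The trace inner product ⟨X,Y⟩ = trace(XᵀY) on m×n real matrices. -/
def matInner {m n : ℕ} (X Y : Matrix (Fin m) (Fin n) ℝ) : ℝ :=
  Matrix.trace (Xᵀ * Y)

/-- The nuclear norm: the sum of the singular values. -/
noncomputable def nuclearNorm {m n : ℕ} (X : Matrix (Fin m) (Fin n) ℝ) : ℝ :=
  sSup {t : ℝ | ∃ s : ℕ → ℝ, IsOrderedSVD X s ∧ t = ∑ i ∈ Finset.range (min m n), s i}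

/-- The entrywise ℓ₁ norm ‖Y‖₁ = Σ|Y_{ij}|. -/
def l1Norm {m n : ℕ} (Y : Matrix (Fin m) (Fin n) ℝ) : ℝ :=
  ∑ i, ∑ j, |Y i j|

/-- The max norm ‖Z‖_∞ = max_{ij}|Z_{ij}|. -/
noncomputable def maxNorm {m n : ℕ} (Z : Matrix (Fin m) (Fin n) ℝ) : ℝ :=
  ⨆ i, ⨆ j, |Z i j|

/-- The spectral norm ‖Z‖₂ = σ_max(Z), as the ℓ₂ operator norm. -/
noncomputable def matSpectralNorm {m n : ℕ} (Z : Matrix (Fin m) (Fin n) ℝ) : ℝ :=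
  ‖LinearMap.toContinuousLinearMap (Matrix.toEuclideanLin Z)‖


namespace VNaux
open Finset


lemma sum_ite_le_eq {N K : ℕ} (hK : K < N) (g : ℕ → ℝ) :
    ∑ k ∈ range N, (if k ≤ K then g k else 0) = ∑ k ∈ range (K+1), g k := by
  rw [← Finset.sum_filter]
  apply Finset.sum_congr _ (fun _ _ => rfl)
  ext x
  simp only [mem_filter, mem_range]
  omega

lemma telescope {N : ℕ} (s : ℕ → ℝ) (hsN : s N = 0) {k : ℕ} (hk : k < N) :
    ∑ K ∈ range N, (if k ≤ K then s K - s (K+1) else 0) = s k := by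
  rw [← Finset.sum_filter]
  have hfil : (range N).filter (fun K => k ≤ K) = Finset.Ico k N := by
    ext x; simp only [mem_filter, mem_range, Finset.mem_Ico]; omega
  rw [hfil, Finset.sum_Ico_eq_sub _ hk.le, Finset.sum_range_sub' s, Finset.sum_range_sub' s, hsN]
  ring

lemma mul_sum_sum (c : ℝ) (f g : ℕ → ℝ) (S T : Finset ℕ) :
    (∑ K ∈ S, f K) * (∑ L ∈ T, g L) * c = ∑ K ∈ S, ∑ L ∈ T, f K * g L * c := by
  rw [Finset.sum_mul_sum, Finset.sum_mul]
  exact Finset.sum_congr rfl fun K _ => by rw [Finset.sum_mul]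

lemma sum_swap4 (N : ℕ) (F : ℕ → ℕ → ℕ → ℕ → ℝ) :
    ∑ k ∈ range N, ∑ l ∈ range N, ∑ K ∈ range N, ∑ L ∈ range N, F k l K L
      = ∑ K ∈ range N, ∑ L ∈ range N, ∑ k ∈ range N, ∑ l ∈ range N, F k l K L := by
  have h1 : ∑ k ∈ range N, ∑ l ∈ range N, ∑ K ∈ range N, ∑ L ∈ range N, F k l K L
      = ∑ k ∈ range N, ∑ K ∈ range N, ∑ l ∈ range N, ∑ L ∈ range N, F k l K L :=
    Finset.sum_congr rfl fun k _ => Finset.sum_comm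
  have h2 : ∑ k ∈ range N, ∑ K ∈ range N, ∑ l ∈ range N, ∑ L ∈ range N, F k l K L
      = ∑ K ∈ range N, ∑ k ∈ range N, ∑ l ∈ range N, ∑ L ∈ range N, F k l K L :=
    Finset.sum_comm
  have h3 : ∑ K ∈ range N, ∑ k ∈ range N, ∑ l ∈ range N, ∑ L ∈ range N, F k l K L
      = ∑ K ∈ range N, ∑ k ∈ range N, ∑ L ∈ range N, ∑ l ∈ range N, F k l K L :=
    Finset.sum_congr rfl fun K _ => Finset.sum_congr rfl fun k _ => Finset.sum_comm
  have h4 : ∑ K ∈ range N, ∑ k ∈ range N, ∑ L ∈ range N, ∑ l ∈ range N, F k l K L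
      = ∑ K ∈ range N, ∑ L ∈ range N, ∑ k ∈ range N, ∑ l ∈ range N, F k l K L :=
    Finset.sum_congr rfl fun K _ => Finset.sum_comm
  rw [h1, h2, h3, h4]

lemma sum_ite_pull {p : Prop} [Decidable p] (S : Finset ℕ) (f : ℕ → ℝ) :
    ∑ l ∈ S, (if p then f l else 0) = if p then ∑ l ∈ S, f l else 0 := by
  split_ifs <;> simp

lemma abel2 (N : ℕ) (s t : ℕ → ℝ) (c : ℕ → ℕ → ℝ)
    (hs : Antitone s) (ht : Antitone t) (hsN : s N = 0) (htN : t N = 0)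
    (hC : ∀ K L : ℕ, K < N → L < N →
      ∑ k ∈ range (K+1), ∑ l ∈ range (L+1), c k l ≤ (min K L : ℝ) + 1) :
    ∑ k ∈ range N, ∑ l ∈ range N, s k * t l * c k l ≤ ∑ k ∈ range N, s k * t k := by
  set α : ℕ → ℝ := fun K => s K - s (K+1) with hα_def
  set β : ℕ → ℝ := fun L => t L - t (L+1) with hβ_def
  have hα : ∀ K, 0 ≤ α K := fun K => sub_nonneg.mpr (hs (Nat.le_succ K))
  have hβ : ∀ L, 0 ≤ β L := fun L => sub_nonneg.mpr (ht (Nat.le_succ L))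
  have key1 : ∑ k ∈ range N, ∑ l ∈ range N, s k * t l * c k l
      = ∑ K ∈ range N, ∑ L ∈ range N, α K * β L *
          (∑ k ∈ range (K+1), ∑ l ∈ range (L+1), c k l) := by
    have step1 : ∑ k ∈ range N, ∑ l ∈ range N, s k * t l * c k l
        = ∑ k ∈ range N, ∑ l ∈ range N, ∑ K ∈ range N, ∑ L ∈ range N,
            (if k ≤ K then (if l ≤ L then α K * β L * c k l else 0) else 0) := by
      apply Finset.sum_congr rfl; intro k hk
      apply Finset.sum_congr rfl; intro l hl
      rw [← telescope s hsN (mem_range.mp hk), ← telescope t htN (mem_range.mp hl),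
          mul_sum_sum]
      apply Finset.sum_congr rfl; intro K _
      apply Finset.sum_congr rfl; intro L _
      split_ifs <;> ring
    rw [step1, sum_swap4]
    apply Finset.sum_congr rfl; intro K hK
    apply Finset.sum_congr rfl; intro L hL
    have inner : ∀ k : ℕ, ∑ l ∈ range N, (if k ≤ K then (if l ≤ L then α K * β L * c k l else 0) else 0)
        = (if k ≤ K then (∑ l ∈ range (L+1), α K * β L * c k l) else 0) := by
      intro k
      rw [sum_ite_pull]
      split_ifs with h
      · exact sum_ite_le_eq (mem_range.mp hL) _
      · rfl
    simp only [inner]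
    rw [sum_ite_le_eq (mem_range.mp hK), Finset.mul_sum]
    apply Finset.sum_congr rfl; intro k _
    rw [Finset.mul_sum]
  have key2 : ∑ k ∈ range N, s k * t k
      = ∑ K ∈ range N, ∑ L ∈ range N, α K * β L * ((min K L : ℝ) + 1) := by
    have step1 : ∑ k ∈ range N, s k * t k
        = ∑ k ∈ range N, ∑ K ∈ range N, ∑ L ∈ range N,
            (if k ≤ min K L then α K * β L else 0) := by
      apply Finset.sum_congr rfl; intro k hk
      have := mul_sum_sum 1 (fun K => if k ≤ K then α K else 0) (fun L => if k ≤ L then β L else 0) (range N) (range N)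
      rw [← telescope s hsN (mem_range.mp hk), ← telescope t htN (mem_range.mp hk)]
      rw [show (∑ K ∈ range N, (if k ≤ K then s K - s (K+1) else 0)) *
            (∑ L ∈ range N, (if k ≤ L then t L - t (L+1) else 0))
          = (∑ K ∈ range N, (if k ≤ K then α K else 0)) *
            (∑ L ∈ range N, (if k ≤ L then β L else 0)) * 1 by ring]
      rw [this]
      apply Finset.sum_congr rfl; intro K _
      apply Finset.sum_congr rfl; intro L _
      split_ifs <;> first | ring1 | omega
    rw [step1]
    have swap : ∑ k ∈ range N, ∑ K ∈ range N, ∑ L ∈ range N,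
            (if k ≤ min K L then α K * β L else 0)
        = ∑ K ∈ range N, ∑ L ∈ range N, ∑ k ∈ range N,
            (if k ≤ min K L then α K * β L else 0) := by
      rw [Finset.sum_comm]
      exact Finset.sum_congr rfl fun K _ => Finset.sum_comm
    rw [swap]
    apply Finset.sum_congr rfl; intro K hK
    apply Finset.sum_congr rfl; intro L hL
    have hmin : min K L < N := lt_of_le_of_lt (min_le_left _ _) (mem_range.mp hK)
    rw [sum_ite_le_eq hmin, Finset.sum_const, card_range, nsmul_eq_mul]
    push_cast
    ring
  rw [key1, key2]
  apply Finset.sum_le_sum; intro K hK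
  apply Finset.sum_le_sum; intro L hL
  exact mul_le_mul_of_nonneg_left (hC K L (mem_range.mp hK) (mem_range.mp hL))
    (mul_nonneg (hα K) (hβ L))



/-- ℕ-indexed extension of a square matrix by zeros. -/
noncomputable def ext2 {d : ℕ} (A : Matrix (Fin d) (Fin d) ℝ) : ℕ → ℕ → ℝ :=
  fun k l => if h : k < d ∧ l < d then A ⟨k, h.1⟩ ⟨l, h.2⟩ else 0

lemma ext2_transpose {d : ℕ} (A : Matrix (Fin d) (Fin d) ℝ) (k l : ℕ) :
    ext2 Aᵀ k l = ext2 A l k := by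
  unfold ext2
  by_cases h : k < d ∧ l < d
  · rw [dif_pos h, dif_pos ⟨h.2, h.1⟩]; rfl
  · rw [dif_neg h, dif_neg (fun h' => h ⟨h'.2, h'.1⟩)]

lemma ext2_row_norm {d : ℕ} (A : Matrix (Fin d) (Fin d) ℝ) (h1 : A * Aᵀ = 1)
    {k : ℕ} (hk : k < d) : ∑ l ∈ range d, (ext2 A k l)^2 = 1 := by
  rw [← Fin.sum_univ_eq_sum_range (fun l => (ext2 A k l)^2) d]
  have : ∀ j : Fin d, (ext2 A k (j : ℕ))^2 = A ⟨k, hk⟩ j * Aᵀ j ⟨k, hk⟩ := by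
    intro j
    unfold ext2
    rw [dif_pos ⟨hk, j.isLt⟩]
    simp [transpose_apply, sq]
  rw [Finset.sum_congr rfl fun j _ => this j, ← Matrix.mul_apply, h1, Matrix.one_apply_eq]

lemma ext2_col_norm {d : ℕ} (A : Matrix (Fin d) (Fin d) ℝ) (h2 : Aᵀ * A = 1)
    {l : ℕ} (hl : l < d) : ∑ k ∈ range d, (ext2 A k l)^2 = 1 := by
  have := ext2_row_norm Aᵀ (by rwa [transpose_transpose]) hl
  simp only [ext2_transpose] at this
  exact this

lemma rect_bound {d : ℕ} (A : Matrix (Fin d) (Fin d) ℝ) (h1 : A * Aᵀ = 1) (h2 : Aᵀ * A = 1)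
    {K L : ℕ} (hK : K < d) (hL : L < d) :
    ∑ k ∈ range (K+1), ∑ l ∈ range (L+1), (ext2 A k l)^2 ≤ (min K L : ℝ) + 1 := by
  have bnd1 : ∑ k ∈ range (K+1), ∑ l ∈ range (L+1), (ext2 A k l)^2 ≤ (K : ℝ) + 1 := by
    have : ∀ k ∈ range (K+1), ∑ l ∈ range (L+1), (ext2 A k l)^2 ≤ 1 := by
      intro k hk
      rw [← ext2_row_norm A h1 (show k < d by have := mem_range.mp hk; omega)]
      apply Finset.sum_le_sum_of_subset_of_nonneg
      · exact Finset.range_subset_range.mpr (by omega)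
      · intro l _ _; positivity
    calc ∑ k ∈ range (K+1), ∑ l ∈ range (L+1), (ext2 A k l)^2
        ≤ ∑ k ∈ range (K+1), (1:ℝ) := Finset.sum_le_sum this
      _ = (K:ℝ) + 1 := by simp
  have bnd2 : ∑ k ∈ range (K+1), ∑ l ∈ range (L+1), (ext2 A k l)^2 ≤ (L : ℝ) + 1 := by
    rw [Finset.sum_comm]
    have : ∀ l ∈ range (L+1), ∑ k ∈ range (K+1), (ext2 A k l)^2 ≤ 1 := by
      intro l hl
      rw [← ext2_col_norm A h2 (show l < d by have := mem_range.mp hl; omega)]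
      apply Finset.sum_le_sum_of_subset_of_nonneg
      · exact Finset.range_subset_range.mpr (by omega)
      · intro k _ _; positivity
    calc ∑ l ∈ range (L+1), ∑ k ∈ range (K+1), (ext2 A k l)^2
        ≤ ∑ l ∈ range (L+1), (1:ℝ) := Finset.sum_le_sum this
      _ = (L:ℝ) + 1 := by simp
  rcases Nat.le_total K L with h | h
  · rw [min_eq_left (show (K:ℝ) ≤ L by exact_mod_cast h)]; exact bnd1
  · rw [min_eq_right (show (L:ℝ) ≤ K by exact_mod_cast h)]; exact bnd2



lemma svdDiagMat_apply {m n : ℕ} (s : ℕ → ℝ) (i : Fin m) (j : Fin n) :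
    svdDiagMat m n s i j = if (i : ℕ) = (j : ℕ) then s (i : ℕ) else 0 := rfl

lemma pick1 {m n : ℕ} (p : Fin n) (s : ℕ → ℝ) (f : Fin m → ℝ) :
    ∑ i : Fin m, (if (i:ℕ) = (p:ℕ) then s (i:ℕ) else 0) * f i
      = if h : (p:ℕ) < m then s (p:ℕ) * f ⟨(p:ℕ), h⟩ else 0 := by
  split_ifs with h
  · rw [Finset.sum_eq_single (⟨(p:ℕ), h⟩ : Fin m)]
    · rw [if_pos rfl]
    · intro i _ hne
      rw [if_neg, zero_mul]
      exact fun hc => hne (Fin.ext hc)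
    · intro habs; exact absurd (Finset.mem_univ _) habs
  · apply Finset.sum_eq_zero; intro i _
    rw [if_neg, zero_mul]
    have := i.isLt; omega

lemma pick2 {m n : ℕ} (j : Fin n) (s : ℕ → ℝ) (g : Fin m → ℝ) :
    ∑ i : Fin m, g i * (if (i:ℕ) = (j:ℕ) then s (i:ℕ) else 0)
      = if h : (j:ℕ) < m then g ⟨(j:ℕ), h⟩ * s (j:ℕ) else 0 := by
  have := pick1 j s g
  calc ∑ i : Fin m, g i * (if (i:ℕ) = (j:ℕ) then s (i:ℕ) else 0)
      = ∑ i : Fin m, (if (i:ℕ) = (j:ℕ) then s (i:ℕ) else 0) * g i := by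
        apply Finset.sum_congr rfl; intro i _; ring
    _ = if h : (j:ℕ) < m then s (j:ℕ) * g ⟨(j:ℕ), h⟩ else 0 := this
    _ = if h : (j:ℕ) < m then g ⟨(j:ℕ), h⟩ * s (j:ℕ) else 0 := by
        split_ifs <;> ring

lemma mid_entry {m n : ℕ} (sX sY : ℕ → ℝ) (A : Matrix (Fin m) (Fin m) ℝ) (p j : Fin n) :
    ((svdDiagMat m n sX)ᵀ * (A * svdDiagMat m n sY)) p j
      = if h : (p:ℕ) < m ∧ (j:ℕ) < m
          then sX (p:ℕ) * sY (j:ℕ) * A ⟨(p:ℕ), h.1⟩ ⟨(j:ℕ), h.2⟩ else 0 := by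
  rw [Matrix.mul_apply]
  have hAD : ∀ i : Fin m, (A * svdDiagMat m n sY) i j
      = if h : (j:ℕ) < m then A i ⟨(j:ℕ), h⟩ * sY (j:ℕ) else 0 := by
    intro i
    rw [Matrix.mul_apply]
    exact pick2 j sY (fun i' => A i i')
  calc ∑ i : Fin m, (svdDiagMat m n sX)ᵀ p i * (A * svdDiagMat m n sY) i j
      = ∑ i : Fin m, (if (i:ℕ) = (p:ℕ) then sX (i:ℕ) else 0) * (A * svdDiagMat m n sY) i j := by
        apply Finset.sum_congr rfl; intro i _
        rw [Matrix.transpose_apply, svdDiagMat_apply]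
    _ = if h : (p:ℕ) < m then sX (p:ℕ) * (A * svdDiagMat m n sY) ⟨(p:ℕ), h⟩ j else 0 :=
        pick1 p sX _
    _ = _ := by
        by_cases hp : (p:ℕ) < m
        · rw [dif_pos hp, hAD]
          by_cases hj : (j:ℕ) < m
          · rw [dif_pos hj, dif_pos ⟨hp, hj⟩]; ring
          · rw [dif_neg hj, dif_neg (fun h => hj h.2), mul_zero]
        · rw [dif_neg hp, dif_neg (fun h => hp h.1)]


end VNaux

open VNaux Finset in
/-- Von Neumann's trace inequality: ⟨X,Y⟩ = trace(XᵀY) ≤ ⟨σ(X),σ(Y)⟩. -/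
theorem von_neumann_trace_inequality {m n : ℕ}
    (X Y : Matrix (Fin m) (Fin n) ℝ) (sX sY : ℕ → ℝ)
    (hX : IsOrderedSVD X sX) (hY : IsOrderedSVD Y sY) :
    matInner X Y ≤ ∑ i ∈ Finset.range (min m n), sX i * sY i := by
  obtain ⟨hXanti, hXpos, hXz, U, V, hU, hV, hXeq⟩ := hX
  obtain ⟨hYanti, hYpos, hYz, P, Q, hP, hQ, hYeq⟩ := hY
  set N := min m n with hN
  set Dx := svdDiagMat m n sX with hDx
  set Dy := svdDiagMat m n sY with hDy
  set A : Matrix (Fin m) (Fin m) ℝ := Uᵀ * P with hA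
  set B : Matrix (Fin n) (Fin n) ℝ := Qᵀ * V with hB
  have hUt : Uᵀ * U = 1 := mul_eq_one_comm.mp hU
  have hVt : Vᵀ * V = 1 := mul_eq_one_comm.mp hV
  have hPt : Pᵀ * P = 1 := mul_eq_one_comm.mp hP
  have hQt : Qᵀ * Q = 1 := mul_eq_one_comm.mp hQ
  have hA1 : A * Aᵀ = 1 := by
    rw [hA, Matrix.transpose_mul, Matrix.transpose_transpose, Matrix.mul_assoc,
      ← Matrix.mul_assoc P, hP, Matrix.one_mul, hUt]
  have hA2 : Aᵀ * A = 1 := by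
    rw [hA, Matrix.transpose_mul, Matrix.transpose_transpose, Matrix.mul_assoc,
      ← Matrix.mul_assoc U, hU, Matrix.one_mul, hPt]
  have hB1 : B * Bᵀ = 1 := by
    rw [hB, Matrix.transpose_mul, Matrix.transpose_transpose, Matrix.mul_assoc,
      ← Matrix.mul_assoc V, hV, Matrix.one_mul, hQt]
  have hB2 : Bᵀ * B = 1 := by
    rw [hB, Matrix.transpose_mul, Matrix.transpose_transpose, Matrix.mul_assoc,
      ← Matrix.mul_assoc Q, hQ, Matrix.one_mul, hVt]
  -- trace identity
  have htr : matInner X Y = Matrix.trace ((Dxᵀ * (A * Dy)) * B) := by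
    have h1 : Xᵀ * Y = V * (Dxᵀ * (A * (Dy * Qᵀ))) := by
      rw [hXeq, hYeq, hA]
      simp only [Matrix.transpose_mul, Matrix.transpose_transpose, Matrix.mul_assoc]
    rw [matInner, h1, Matrix.trace_mul_comm, hB]
    congr 1
    simp only [Matrix.mul_assoc]
  -- convert to double sum over range N
  set g : ℕ → ℕ → ℝ := fun k l => sX k * sY l * (ext2 A k l * ext2 B l k) with hg
  have hsummand : ∀ p j : Fin n,
      (if h : (p:ℕ) < m ∧ (j:ℕ) < m
        then sX (p:ℕ) * sY (j:ℕ) * A ⟨(p:ℕ), h.1⟩ ⟨(j:ℕ), h.2⟩ else 0) * B j p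
      = g (p:ℕ) (j:ℕ) := by
    intro p j
    rw [hg]
    simp only [ext2]
    by_cases h : (p:ℕ) < m ∧ (j:ℕ) < m
    · rw [dif_pos h, dif_pos h, dif_pos ⟨j.isLt, p.isLt⟩]
      simp only [Fin.eta]
      ring
    · rw [dif_neg h, dif_neg h]
      ring
  have hsum : matInner X Y = ∑ k ∈ range N, ∑ l ∈ range N, g k l := by
    rw [htr, Matrix.trace]
    calc ∑ p, ((Dxᵀ * (A * Dy)) * B).diag p
        = ∑ p : Fin n, ∑ j : Fin n, g (p:ℕ) (j:ℕ) := by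
          apply Finset.sum_congr rfl; intro p _
          rw [Matrix.diag_apply, Matrix.mul_apply]
          apply Finset.sum_congr rfl; intro j _
          rw [hDx, hDy, mid_entry, hsummand]
      _ = ∑ k ∈ range n, ∑ l ∈ range n, g k l := by
          rw [← Fin.sum_univ_eq_sum_range (fun k => ∑ l ∈ range n, g k l) n]
          apply Finset.sum_congr rfl; intro p _
          exact Fin.sum_univ_eq_sum_range (fun l => g (p:ℕ) l) n
      _ = ∑ k ∈ range N, ∑ l ∈ range n, g k l := by
          symm
          apply Finset.sum_subset (Finset.range_subset_range.mpr (min_le_right m n))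
          intro k _ hk'
          apply Finset.sum_eq_zero; intro l _
          have : sX k = 0 := hXz k (by simpa [hN] using Finset.mem_range.not.mp hk' |> Nat.le_of_not_lt)
          simp [hg, this]
      _ = ∑ k ∈ range N, ∑ l ∈ range N, g k l := by
          apply Finset.sum_congr rfl; intro k _
          symm
          apply Finset.sum_subset (Finset.range_subset_range.mpr (min_le_right m n))
          intro l _ hl'
          have : sY l = 0 := hYz l (by simpa [hN] using Finset.mem_range.not.mp hl' |> Nat.le_of_not_lt)
          simp [hg, this]
  rw [hsum]
  apply abel2 N sX sY (fun k l => ext2 A k l * ext2 B l k) hXanti hYanti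
    (hXz N le_rfl) (hYz N le_rfl)
  intro K L hK hL
  have hKm : K < m := lt_of_lt_of_le hK (min_le_left m n)
  have hKn : K < n := lt_of_lt_of_le hK (min_le_right m n)
  have hLm : L < m := lt_of_lt_of_le hL (min_le_left m n)
  have hLn : L < n := lt_of_lt_of_le hL (min_le_right m n)
  calc ∑ k ∈ range (K+1), ∑ l ∈ range (L+1), ext2 A k l * ext2 B l k
      ≤ ∑ k ∈ range (K+1), ∑ l ∈ range (L+1),
          ((ext2 A k l)^2 + (ext2 B l k)^2) / 2 := by
        apply Finset.sum_le_sum; intro k _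
        apply Finset.sum_le_sum; intro l _
        nlinarith [sq_nonneg (ext2 A k l - ext2 B l k)]
    _ = ((∑ k ∈ range (K+1), ∑ l ∈ range (L+1), (ext2 A k l)^2)
        + (∑ k ∈ range (K+1), ∑ l ∈ range (L+1), (ext2 B l k)^2)) / 2 := by
        rw [← Finset.sum_add_distrib]
        rw [Finset.sum_div]
        apply Finset.sum_congr rfl; intro k _
        rw [← Finset.sum_add_distrib, Finset.sum_div]
    _ ≤ (((min K L : ℝ) + 1) + ((min K L : ℝ) + 1)) / 2 := by
        have h1 := rect_bound A hA1 hA2 hKm hLm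
        have h2' : ∑ k ∈ range (K+1), ∑ l ∈ range (L+1), (ext2 B l k)^2
            = ∑ l ∈ range (L+1), ∑ k ∈ range (K+1), (ext2 B l k)^2 := Finset.sum_comm
        have h2 := rect_bound B hB1 hB2 hLn hKn
        rw [min_comm] at h2
        rw [h2'] at *
        linarith [h1, h2]
    _ = (min K L : ℝ) + 1 := by ring
end

section
/- Strong gauge duality for robust PCA: for M ≠ 0 and γ > 0, both problems min{‖X‖_* + γ‖Y‖₁ : X + Y = M} and min{max{‖Z‖₂, ‖Z‖_∞/γ} : ⟨M,Z⟩ ≥ 1} attain their optimal values, and the product of the two optimal values equals 1. -/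
open Matrix

namespace RPCA
variable {m n : ℕ}

lemma matInner_eq_sum (X Z : Matrix (Fin m) (Fin n) ℝ) :
    matInner X Z = ∑ i, ∑ j, X i j * Z i j := by
  unfold matInner Matrix.trace
  simp only [Matrix.diag, Matrix.mul_apply, Matrix.transpose_apply]
  rw [Finset.sum_comm]

lemma norm_toEuclideanLin_le (Z : Matrix (Fin m) (Fin n) ℝ) (x : EuclideanSpace ℝ (Fin n)) :
    ‖Matrix.toEuclideanLin Z x‖ ≤ matSpectralNorm Z * ‖x‖ := by
  have := (LinearMap.toContinuousLinearMap (Matrix.toEuclideanLin Z)).le_opNorm x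
  simpa [matSpectralNorm] using this

lemma spectralNorm_nonneg (Z : Matrix (Fin m) (Fin n) ℝ) : 0 ≤ matSpectralNorm Z :=
  norm_nonneg _

lemma spectralNorm_le_of_forall {Z : Matrix (Fin m) (Fin n) ℝ} {c : ℝ} (hc : 0 ≤ c)
    (h : ∀ x : EuclideanSpace ℝ (Fin n), ‖Matrix.toEuclideanLin Z x‖ ≤ c * ‖x‖) :
    matSpectralNorm Z ≤ c := by
  apply ContinuousLinearMap.opNorm_le_bound _ hc
  intro x
  simpa using h x

lemma toEuclideanLin_apply'' (Z : Matrix (Fin m) (Fin n) ℝ) (x : EuclideanSpace ℝ (Fin n))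
    (i : Fin m) : Matrix.toEuclideanLin Z x i = ∑ j, Z i j * x j := by
  rw [Matrix.toEuclideanLin_apply]
  simp [Matrix.mulVec, dotProduct]

lemma bilin_le_spectral (Z : Matrix (Fin m) (Fin n) ℝ) (u : EuclideanSpace ℝ (Fin m))
    (x : EuclideanSpace ℝ (Fin n)) :
    ∑ i, ∑ j, u i * (Z i j * x j) ≤ matSpectralNorm Z * (‖u‖ * ‖x‖) := by
  have h1 : ∑ i, ∑ j, u i * (Z i j * x j) = inner ℝ u (Matrix.toEuclideanLin Z x) := by
    rw [PiLp.inner_apply]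
    simp [toEuclideanLin_apply'', Finset.mul_sum]
    exact Finset.sum_congr rfl fun i _ => by
      rw [Finset.sum_mul]; exact Finset.sum_congr rfl fun j _ => by ring
  rw [h1]
  calc inner ℝ u (Matrix.toEuclideanLin Z x) ≤ ‖u‖ * ‖Matrix.toEuclideanLin Z x‖ :=
        real_inner_le_norm _ _
    _ ≤ ‖u‖ * (matSpectralNorm Z * ‖x‖) := by
        have := norm_toEuclideanLin_le Z x
        nlinarith [norm_nonneg u]
    _ = matSpectralNorm Z * (‖u‖ * ‖x‖) := by ring

lemma abs_coord_le_norm (x : EuclideanSpace ℝ (Fin n)) (j : Fin n) : |x j| ≤ ‖x‖ := by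
  rw [EuclideanSpace.norm_eq]
  have : |x j| = Real.sqrt (|x j| ^ 2) := by
    rw [Real.sqrt_sq (abs_nonneg _)]
  rw [this]
  apply Real.sqrt_le_sqrt
  rw [sq_abs]
  have : (x j) ^ 2 = ‖x j‖ ^ 2 := by simp [Real.norm_eq_abs, sq_abs]
  rw [this]
  exact Finset.single_le_sum (f := fun i => ‖x i‖ ^ 2) (fun i _ => by positivity)
    (Finset.mem_univ j)

lemma spectralNorm_zero : matSpectralNorm (0 : Matrix (Fin m) (Fin n) ℝ) = 0 := by
  have h := spectralNorm_le_of_forall (Z := (0 : Matrix (Fin m) (Fin n) ℝ)) le_rfl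
    (fun x => by simp [map_zero])
  exact le_antisymm h (spectralNorm_nonneg _)

lemma abs_entry_le_spectral (Z : Matrix (Fin m) (Fin n) ℝ) (i : Fin m) (j : Fin n) :
    |Z i j| ≤ matSpectralNorm Z := by
  set c : ℝ := if 0 ≤ Z i j then 1 else -1 with hc
  have := bilin_le_spectral Z (EuclideanSpace.single i c) (EuclideanSpace.single j 1)
  have hl : ∑ i', ∑ j', (EuclideanSpace.single i c : EuclideanSpace ℝ (Fin m)) i' *
      (Z i' j' * (EuclideanSpace.single j (1:ℝ) : EuclideanSpace ℝ (Fin n)) j') = c * Z i j := by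
    simp [EuclideanSpace.single_apply, Finset.sum_ite_eq', mul_comm]
  have hn : ‖(EuclideanSpace.single i c : EuclideanSpace ℝ (Fin m))‖ = 1 := by
    rw [EuclideanSpace.norm_single]
    rw [hc]; split <;> simp
  have hn2 : ‖(EuclideanSpace.single j (1:ℝ) : EuclideanSpace ℝ (Fin n))‖ = 1 := by
    rw [EuclideanSpace.norm_single]; simp
  rw [hl, hn, hn2] at this
  have habs : |Z i j| = c * Z i j := by
    rw [hc]; rcases le_or_gt 0 (Z i j) with h | h
    · simp [abs_of_nonneg h, if_pos h]
    · simp [abs_of_neg h, not_le.mpr h]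
  rw [habs]
  linarith

lemma spectralNorm_eq_zero_iff {Z : Matrix (Fin m) (Fin n) ℝ} :
    matSpectralNorm Z = 0 ↔ Z = 0 := by
  constructor
  · intro h
    ext i j
    have := abs_entry_le_spectral Z i j
    rw [h] at this
    simpa using le_antisymm this (abs_nonneg (Z i j))
  · rintro rfl; exact spectralNorm_zero

lemma spectralNorm_smul (c : ℝ) (Z : Matrix (Fin m) (Fin n) ℝ) :
    matSpectralNorm (c • Z) = |c| * matSpectralNorm Z := by
  unfold matSpectralNorm
  rw [show Matrix.toEuclideanLin (c • Z) = c • Matrix.toEuclideanLin Z from map_smul _ c Z]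
  rw [show LinearMap.toContinuousLinearMap (c • Matrix.toEuclideanLin Z)
      = c • LinearMap.toContinuousLinearMap (Matrix.toEuclideanLin Z) from map_smul _ c _]
  rw [norm_smul c (LinearMap.toContinuousLinearMap (Matrix.toEuclideanLin Z))]
  norm_num

/-- The dual description of the nuclear norm. -/
noncomputable def N (X : Matrix (Fin m) (Fin n) ℝ) : ℝ :=
  sSup {r : ℝ | ∃ Z, matSpectralNorm Z ≤ 1 ∧ r = matInner X Z}

lemma zero_mem_dualSet (X : Matrix (Fin m) (Fin n) ℝ) :
    (0:ℝ) ∈ {r : ℝ | ∃ Z, matSpectralNorm Z ≤ 1 ∧ r = matInner X Z} :=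
  ⟨0, by rw [spectralNorm_zero]; norm_num, by simp [matInner_eq_sum]⟩

lemma mem_dualSet_le_l1 (X : Matrix (Fin m) (Fin n) ℝ) :
    ∀ r ∈ {r : ℝ | ∃ Z, matSpectralNorm Z ≤ 1 ∧ r = matInner X Z}, r ≤ l1Norm X := by
  rintro r ⟨Z, hZ, rfl⟩
  rw [matInner_eq_sum]
  unfold l1Norm
  apply Finset.sum_le_sum; intro i _
  apply Finset.sum_le_sum; intro j _
  calc X i j * Z i j ≤ |X i j * Z i j| := le_abs_self _
    _ = |X i j| * |Z i j| := abs_mul _ _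
    _ ≤ |X i j| * 1 := by
        have := (abs_entry_le_spectral Z i j).trans hZ
        nlinarith [abs_nonneg (X i j)]
    _ = |X i j| := mul_one _

lemma bddAbove_dualSet (X : Matrix (Fin m) (Fin n) ℝ) :
    BddAbove {r : ℝ | ∃ Z, matSpectralNorm Z ≤ 1 ∧ r = matInner X Z} :=
  ⟨l1Norm X, fun r hr => mem_dualSet_le_l1 X r hr⟩

lemma matInner_le_N {X Z : Matrix (Fin m) (Fin n) ℝ} (hZ : matSpectralNorm Z ≤ 1) :
    matInner X Z ≤ N X :=
  le_csSup (bddAbove_dualSet X) ⟨Z, hZ, rfl⟩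

lemma N_nonneg (X : Matrix (Fin m) (Fin n) ℝ) : 0 ≤ N X :=
  le_csSup (bddAbove_dualSet X) (zero_mem_dualSet X)

lemma N_le_l1 (X : Matrix (Fin m) (Fin n) ℝ) : N X ≤ l1Norm X :=
  csSup_le ⟨0, zero_mem_dualSet X⟩ (mem_dualSet_le_l1 X)

lemma N_le_of_forall {X : Matrix (Fin m) (Fin n) ℝ} {c : ℝ}
    (h : ∀ Z, matSpectralNorm Z ≤ 1 → matInner X Z ≤ c) : N X ≤ c :=
  csSup_le ⟨0, zero_mem_dualSet X⟩ (by rintro r ⟨Z, hZ, rfl⟩; exact h Z hZ)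

lemma matInner_add_left (X X' Z : Matrix (Fin m) (Fin n) ℝ) :
    matInner (X + X') Z = matInner X Z + matInner X' Z := by
  simp [matInner_eq_sum, add_mul, Finset.sum_add_distrib]

lemma matInner_smul_left (c : ℝ) (X Z : Matrix (Fin m) (Fin n) ℝ) :
    matInner (c • X) Z = c * matInner X Z := by
  simp [matInner_eq_sum, Finset.mul_sum, mul_assoc]

lemma matInner_smul_right (c : ℝ) (X Z : Matrix (Fin m) (Fin n) ℝ) :
    matInner X (c • Z) = c * matInner X Z := by
  simp [matInner_eq_sum, Finset.mul_sum]; congr 1; ext i; congr 1; ext j; ring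

lemma N_add_le (X X' : Matrix (Fin m) (Fin n) ℝ) : N (X + X') ≤ N X + N X' := by
  apply N_le_of_forall
  intro Z hZ
  rw [matInner_add_left]
  exact add_le_add (matInner_le_N hZ) (matInner_le_N hZ)

lemma N_smul {c : ℝ} (hc : 0 ≤ c) (X : Matrix (Fin m) (Fin n) ℝ) : N (c • X) = c * N X := by
  rcases eq_or_lt_of_le hc with rfl | hc'
  · simp only [zero_smul, zero_mul]
    apply le_antisymm
    · apply N_le_of_forall; intro Z hZ
      simp [matInner_eq_sum]
    · exact N_nonneg 0
  · apply le_antisymm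
    · apply N_le_of_forall; intro Z hZ
      rw [matInner_smul_left]
      have := matInner_le_N (X := X) hZ
      nlinarith
    · rw [← le_div_iff₀' hc']
      apply N_le_of_forall; intro Z hZ
      rw [le_div_iff₀' hc', ← matInner_smul_left]
      exact matInner_le_N hZ

lemma abs_entry_le_N (X : Matrix (Fin m) (Fin n) ℝ) (i : Fin m) (j : Fin n) :
    |X i j| ≤ N X := by
  set c : ℝ := if 0 ≤ X i j then 1 else -1 with hc
  have hZ : matSpectralNorm (Matrix.single i j c) ≤ 1 := by
    apply spectralNorm_le_of_forall zero_le_one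
    intro x
    have : Matrix.toEuclideanLin (Matrix.single i j c) x
        = EuclideanSpace.single i (c * x j) := by
      ext i'
      rw [toEuclideanLin_apply'']
      simp [Matrix.single, EuclideanSpace.single_apply]
      split
      · rename_i h
        subst h
        simp [Finset.sum_ite_eq, mul_comm]
      · rename_i h
        rw [Finset.sum_eq_zero]
        intro j' _
        simp only [ite_eq_right_iff]
        rintro ⟨h1, -⟩
        exact absurd h1.symm h
    rw [this, EuclideanSpace.norm_single, one_mul]
    calc ‖c * x j‖ = |c| * |x j| := by rw [Real.norm_eq_abs, abs_mul]
      _ ≤ 1 * ‖x‖ := by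
          have h1 : |c| = 1 := by rw [hc]; split <;> simp
          rw [h1, one_mul]
          simpa using abs_coord_le_norm x j
      _ = ‖x‖ := one_mul _
  have := matInner_le_N (X := X) hZ
  have hv : matInner X (Matrix.single i j c) = c * X i j := by
    rw [matInner_eq_sum]
    simp only [Matrix.single, Matrix.of_apply, mul_ite, mul_zero]
    rw [Finset.sum_eq_single i, Finset.sum_eq_single j]
    · simp [mul_comm]
    · intro j' _ hj'; simp [hj'.symm]
    · intro h; exact absurd (Finset.mem_univ j) h
    · intro i' _ hi'
      rw [Finset.sum_eq_zero]; intro j' _; simp [hi'.symm]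
    · intro h; exact absurd (Finset.mem_univ i) h
  have habs : |X i j| = c * X i j := by
    rw [hc]; rcases le_or_gt 0 (X i j) with h | h
    · simp [abs_of_nonneg h, if_pos h]
    · simp [abs_of_neg h, not_le.mpr h]
  rw [habs, ← hv]
  exact this

lemma matInner_le_N_mul (X Z : Matrix (Fin m) (Fin n) ℝ) :
    matInner X Z ≤ N X * matSpectralNorm Z := by
  rcases eq_or_lt_of_le (spectralNorm_nonneg Z) with h0 | hpos
  · rw [← h0, mul_zero]
    have : Z = 0 := spectralNorm_eq_zero_iff.mp h0.symm
    simp [this, matInner_eq_sum]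
  · have h1 : matSpectralNorm ((matSpectralNorm Z)⁻¹ • Z) ≤ 1 := by
      rw [spectralNorm_smul, abs_of_nonneg (by positivity)]
      rw [inv_mul_cancel₀ (ne_of_gt hpos)]
    have := matInner_le_N (X := X) h1
    rw [matInner_smul_right] at this
    calc matInner X Z = matSpectralNorm Z * ((matSpectralNorm Z)⁻¹ * matInner X Z) := by
          field_simp
      _ ≤ matSpectralNorm Z * N X := by nlinarith
      _ = N X * matSpectralNorm Z := mul_comm _ _

lemma l1_nonneg (Y : Matrix (Fin m) (Fin n) ℝ) : 0 ≤ l1Norm Y := by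
  apply Finset.sum_nonneg; intro i _
  apply Finset.sum_nonneg; intro j _
  exact abs_nonneg _

lemma l1_add_le (Y Y' : Matrix (Fin m) (Fin n) ℝ) : l1Norm (Y + Y') ≤ l1Norm Y + l1Norm Y' := by
  unfold l1Norm
  rw [← Finset.sum_add_distrib]
  apply Finset.sum_le_sum; intro i _
  rw [← Finset.sum_add_distrib]
  apply Finset.sum_le_sum; intro j _
  exact abs_add_le _ _

lemma l1_smul (c : ℝ) (Y : Matrix (Fin m) (Fin n) ℝ) : l1Norm (c • Y) = |c| * l1Norm Y := by
  unfold l1Norm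
  simp [abs_mul, Finset.mul_sum]

lemma l1_neg (Y : Matrix (Fin m) (Fin n) ℝ) : l1Norm (-Y) = l1Norm Y := by
  unfold l1Norm; simp

lemma abs_entry_le_l1 (Y : Matrix (Fin m) (Fin n) ℝ) (i : Fin m) (j : Fin n) :
    |Y i j| ≤ l1Norm Y := by
  unfold l1Norm
  calc |Y i j| ≤ ∑ j', |Y i j'| :=
        Finset.single_le_sum (f := fun j' => |Y i j'|) (fun _ _ => abs_nonneg _)
          (Finset.mem_univ j)
    _ ≤ ∑ i', ∑ j', |Y i' j'| :=
        Finset.single_le_sum (f := fun i' => ∑ j', |Y i' j'|)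
          (fun _ _ => Finset.sum_nonneg fun _ _ => abs_nonneg _) (Finset.mem_univ i)

lemma abs_entry_le_maxNorm (Z : Matrix (Fin m) (Fin n) ℝ) (i : Fin m) (j : Fin n) :
    |Z i j| ≤ maxNorm Z := by
  calc |Z i j| ≤ ⨆ j', |Z i j'| := le_ciSup (f := fun j' => |Z i j'|) (Set.Finite.bddAbove (Set.finite_range _)) j
    _ ≤ maxNorm Z := le_ciSup (f := fun i' => ⨆ j', |Z i' j'|)
        (Set.Finite.bddAbove (Set.finite_range _)) i

lemma maxNorm_le [Nonempty (Fin m)] [Nonempty (Fin n)] {Z : Matrix (Fin m) (Fin n) ℝ} {c : ℝ}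
    (h : ∀ i j, |Z i j| ≤ c) : maxNorm Z ≤ c :=
  ciSup_le fun i => ciSup_le fun j => h i j

lemma maxNorm_nonneg [Nonempty (Fin m)] [Nonempty (Fin n)] (Z : Matrix (Fin m) (Fin n) ℝ) :
    0 ≤ maxNorm Z := by
  obtain ⟨i⟩ := ‹Nonempty (Fin m)›
  obtain ⟨j⟩ := ‹Nonempty (Fin n)›
  exact (abs_nonneg (Z i j)).trans (abs_entry_le_maxNorm Z i j)

lemma maxNorm_smul [Nonempty (Fin m)] [Nonempty (Fin n)] {c : ℝ} (hc : 0 ≤ c)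
    (Z : Matrix (Fin m) (Fin n) ℝ) : maxNorm (c • Z) = c * maxNorm Z := by
  rcases eq_or_lt_of_le hc with rfl | hc'
  · simp only [zero_smul, zero_mul]
    apply le_antisymm
    · exact maxNorm_le fun i j => by simp
    · exact maxNorm_nonneg 0
  · apply le_antisymm
    · apply maxNorm_le
      intro i j
      calc |(c • Z) i j| = c * |Z i j| := by
            simp [abs_mul, abs_of_nonneg hc]
        _ ≤ c * maxNorm Z := by
            have := abs_entry_le_maxNorm Z i j; nlinarith
    · rw [← le_div_iff₀' hc']
      apply maxNorm_le
      intro i j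
      rw [le_div_iff₀' hc']
      calc c * |Z i j| = |(c • Z) i j| := by simp [abs_mul, abs_of_nonneg hc]
        _ ≤ maxNorm (c • Z) := abs_entry_le_maxNorm _ i j

lemma matInner_le_l1_maxNorm [Nonempty (Fin m)] [Nonempty (Fin n)]
    (Y Z : Matrix (Fin m) (Fin n) ℝ) : matInner Y Z ≤ l1Norm Y * maxNorm Z := by
  rw [matInner_eq_sum]
  unfold l1Norm
  rw [Finset.sum_mul]
  apply Finset.sum_le_sum; intro i _
  rw [Finset.sum_mul]
  apply Finset.sum_le_sum; intro j _
  calc Y i j * Z i j ≤ |Y i j * Z i j| := le_abs_self _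
    _ = |Y i j| * |Z i j| := abs_mul _ _
    _ ≤ |Y i j| * maxNorm Z := by
        have := abs_entry_le_maxNorm Z i j
        nlinarith [abs_nonneg (Y i j)]


section Rho
attribute [local instance] Matrix.normedAddCommGroup Matrix.normedSpace

variable {m n : ℕ} {γ : ℝ}

lemma l1_le_norm (V : Matrix (Fin m) (Fin n) ℝ) : l1Norm V ≤ (m * n : ℝ) * ‖V‖ := by
  unfold l1Norm
  calc ∑ i, ∑ j, |V i j| ≤ ∑ _i : Fin m, ∑ _j : Fin n, ‖V‖ := by
        apply Finset.sum_le_sum; intro i _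
        apply Finset.sum_le_sum; intro j _
        exact Matrix.norm_entry_le_entrywise_sup_norm V
    _ = (m * n : ℝ) * ‖V‖ := by
        simp [Finset.sum_const, mul_assoc]

lemma N_sub_le (X X' : Matrix (Fin m) (Fin n) ℝ) : N X - N X' ≤ l1Norm (X - X') := by
  have h := N_add_le X' (X - X')
  rw [show X' + (X - X') = X by abel] at h
  have := N_le_l1 (X - X')
  linarith

/-- The primal objective. -/
noncomputable def pobj (γ : ℝ) (W X : Matrix (Fin m) (Fin n) ℝ) : ℝ :=
  N X + γ * l1Norm (W - X)

lemma pobj_lipschitz (hγ : 0 < γ) (W X X' : Matrix (Fin m) (Fin n) ℝ) :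
    |pobj γ W X - pobj γ W X'| ≤ (1 + γ) * ((m * n : ℝ) * ‖X - X'‖) := by
  have key : ∀ A B : Matrix (Fin m) (Fin n) ℝ, pobj γ W A - pobj γ W B ≤
      (1 + γ) * l1Norm (A - B) := by
    intro A B
    unfold pobj
    have h1 := N_sub_le A B
    have h2 : l1Norm (W - A) - l1Norm (W - B) ≤ l1Norm (A - B) := by
      have h := l1_add_le (W - B) (B - A)
      rw [show W - B + (B - A) = W - A by abel] at h
      have hneg : l1Norm (B - A) = l1Norm (A - B) := by
        rw [show B - A = -(A - B) by abel, l1_neg]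
      linarith
    nlinarith [l1_nonneg (A - B)]
  have hsymm : l1Norm (X' - X) = l1Norm (X - X') := by
    rw [show X' - X = -(X - X') by abel, l1_neg]
  have hb := key X X'
  have hb2 := key X' X
  rw [hsymm] at hb2
  have hl : l1Norm (X - X') ≤ (m * n : ℝ) * ‖X - X'‖ := l1_le_norm _
  rw [abs_sub_le_iff]
  constructor <;> nlinarith [l1_nonneg (X - X'), norm_nonneg (X - X')]

lemma pobj_continuous (hγ : 0 < γ) (W : Matrix (Fin m) (Fin n) ℝ) :
    Continuous (pobj γ W) := by
  have hC : (0:ℝ) ≤ (1 + γ) * (m * n : ℝ) := by positivity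
  apply LipschitzWith.continuous (K := Real.toNNReal ((1 + γ) * (m * n : ℝ)))
  apply LipschitzWith.of_dist_le_mul
  intro X X'
  rw [Real.dist_eq, dist_eq_norm]
  have := pobj_lipschitz hγ W X X'
  calc |pobj γ W X - pobj γ W X'| ≤ (1 + γ) * ((m * n : ℝ) * ‖X - X'‖) := this
    _ = ((1 + γ) * (m * n : ℝ)) * ‖X - X'‖ := by ring
    _ = (Real.toNNReal ((1 + γ) * (m * n : ℝ)) : ℝ) * ‖X - X'‖ := by
        rw [Real.coe_toNNReal _ hC]

lemma pobj_exists_min (hγ : 0 < γ) (W : Matrix (Fin m) (Fin n) ℝ) :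
    ∃ X, ∀ X', pobj γ W X ≤ pobj γ W X' := by
  haveI : ProperSpace (Matrix (Fin m) (Fin n) ℝ) := FiniteDimensional.proper ℝ _
  set K : Set (Matrix (Fin m) (Fin n) ℝ) := {X | pobj γ W X ≤ pobj γ W 0} with hK
  have hKclosed : IsClosed K := isClosed_le (pobj_continuous hγ W) continuous_const
  have h0K : (0 : Matrix (Fin m) (Fin n) ℝ) ∈ K := by
    simp only [hK, Set.mem_setOf_eq]
    exact le_rfl
  have hKball : K ⊆ Metric.closedBall 0 (pobj γ W 0) := by
    intro X hX
    rw [Metric.mem_closedBall, dist_zero_right]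
    have h1 : ‖X‖ ≤ N X := by
      rw [Matrix.norm_le_iff (N_nonneg X)]
      intro i j
      rw [Real.norm_eq_abs]
      exact abs_entry_le_N X i j
    have h2 : N X ≤ pobj γ W X := by
      unfold pobj
      nlinarith [l1_nonneg (W - X)]
    exact h1.trans (h2.trans hX)
  have hKcompact : IsCompact K :=
    (isCompact_closedBall 0 (pobj γ W 0)).of_isClosed_subset hKclosed hKball
  obtain ⟨X₀, hX₀K, hmin⟩ := hKcompact.exists_isMinOn ⟨0, h0K⟩
    (pobj_continuous hγ W).continuousOn
  refine ⟨X₀, fun X' => ?_⟩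
  by_cases hX' : X' ∈ K
  · exact hmin hX'
  · have : pobj γ W 0 < pobj γ W X' := lt_of_not_ge hX'
    exact (hmin h0K).trans this.le

/-- The primal optimal value as a function of the right-hand side. -/
noncomputable def rho (γ : ℝ) (W : Matrix (Fin m) (Fin n) ℝ) : ℝ :=
  sInf {t : ℝ | ∃ X Y, X + Y = W ∧ t = N X + γ * l1Norm Y}

lemma rhoSet_nonempty (γ : ℝ) (W : Matrix (Fin m) (Fin n) ℝ) :
    {t : ℝ | ∃ X Y, X + Y = W ∧ t = N X + γ * l1Norm Y}.Nonempty :=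
  ⟨N W + γ * l1Norm 0, W, 0, add_zero W, rfl⟩

lemma rhoSet_bddBelow (hγ : 0 < γ) (W : Matrix (Fin m) (Fin n) ℝ) :
    BddBelow {t : ℝ | ∃ X Y, X + Y = W ∧ t = N X + γ * l1Norm Y} := by
  refine ⟨0, ?_⟩
  rintro t ⟨X, Y, hXY, rfl⟩
  nlinarith [N_nonneg X, l1_nonneg Y]

lemma rho_le (hγ : 0 < γ) {W X Y : Matrix (Fin m) (Fin n) ℝ} (h : X + Y = W) :
    rho γ W ≤ N X + γ * l1Norm Y :=
  csInf_le (rhoSet_bddBelow hγ W) ⟨X, Y, h, rfl⟩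

lemma rho_attained (hγ : 0 < γ) (W : Matrix (Fin m) (Fin n) ℝ) :
    ∃ X Y, X + Y = W ∧ rho γ W = N X + γ * l1Norm Y ∧
      ∀ X' Y', X' + Y' = W → N X + γ * l1Norm Y ≤ N X' + γ * l1Norm Y' := by
  obtain ⟨X₀, hmin⟩ := pobj_exists_min hγ W
  refine ⟨X₀, W - X₀, by abel, ?_, ?_⟩
  · apply le_antisymm
    · exact rho_le hγ (by abel)
    · apply le_csInf (rhoSet_nonempty γ W)
      rintro t ⟨X, Y, hXY, rfl⟩
      have hY : Y = W - X := by rw [← hXY]; abel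
      have := hmin X
      unfold pobj at this
      rw [hY]
      exact this
  · intro X' Y' hXY'
    have hY' : Y' = W - X' := by rw [← hXY']; abel
    have := hmin X'
    unfold pobj at this
    rw [hY']
    exact this

lemma rho_nonneg (hγ : 0 < γ) (W : Matrix (Fin m) (Fin n) ℝ) : 0 ≤ rho γ W := by
  apply le_csInf (rhoSet_nonempty γ W)
  rintro t ⟨X, Y, hXY, rfl⟩
  nlinarith [N_nonneg X, l1_nonneg Y]

lemma rho_add_le (hγ : 0 < γ) (W₁ W₂ : Matrix (Fin m) (Fin n) ℝ) :
    rho γ (W₁ + W₂) ≤ rho γ W₁ + rho γ W₂ := by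
  obtain ⟨X₁, Y₁, h₁, e₁, -⟩ := rho_attained hγ W₁
  obtain ⟨X₂, Y₂, h₂, e₂, -⟩ := rho_attained hγ W₂
  have hsum : (X₁ + X₂) + (Y₁ + Y₂) = W₁ + W₂ := by rw [← h₁, ← h₂]; abel
  calc rho γ (W₁ + W₂) ≤ N (X₁ + X₂) + γ * l1Norm (Y₁ + Y₂) := rho_le hγ hsum
    _ ≤ (N X₁ + N X₂) + γ * (l1Norm Y₁ + l1Norm Y₂) := by
        have h3 := N_add_le X₁ X₂
        have h4 := l1_add_le Y₁ Y₂
        nlinarith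
    _ = rho γ W₁ + rho γ W₂ := by rw [e₁, e₂]; ring

lemma rho_smul_pos (hγ : 0 < γ) {c : ℝ} (hc : 0 < c) (W : Matrix (Fin m) (Fin n) ℝ) :
    rho γ (c • W) = c * rho γ W := by
  have key : ∀ d : ℝ, 0 < d → ∀ V : Matrix (Fin m) (Fin n) ℝ,
      rho γ (d • V) ≤ d * rho γ V := by
    intro d hd V
    obtain ⟨X, Y, hXY, e, -⟩ := rho_attained hγ V
    have hsum : d • X + d • Y = d • V := by rw [← hXY]; module
    calc rho γ (d • V) ≤ N (d • X) + γ * l1Norm (d • Y) := rho_le hγ hsum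
      _ = d * (N X + γ * l1Norm Y) := by
          rw [N_smul hd.le, l1_smul, abs_of_nonneg hd.le]; ring
      _ = d * rho γ V := by rw [e]
  apply le_antisymm (key c hc W)
  have h2 := key c⁻¹ (by positivity) (c • W)
  rw [smul_smul, inv_mul_cancel₀ hc.ne', one_smul] at h2
  calc c * rho γ W ≤ c * (c⁻¹ * rho γ (c • W)) := by nlinarith
    _ = rho γ (c • W) := by field_simp

lemma rho_pos (hγ : 0 < γ) {W : Matrix (Fin m) (Fin n) ℝ} (hW : W ≠ 0) :
    0 < rho γ W := by
  have : ∃ i j, W i j ≠ 0 := by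
    by_contra h
    push_neg at h
    exact hW (by ext i j; exact h i j)
  obtain ⟨i, j, hij⟩ := this
  have hlb : min 1 γ * |W i j| ≤ rho γ W := by
    apply le_csInf (rhoSet_nonempty γ W)
    rintro t ⟨X, Y, hXY, rfl⟩
    have habs : |W i j| ≤ |X i j| + |Y i j| := by
      rw [← hXY]
      exact abs_add_le _ _
    have h1 := abs_entry_le_N X i j
    have h2 := abs_entry_le_l1 Y i j
    have hm1 : min 1 γ ≤ 1 := min_le_left _ _
    have hm2 : min 1 γ ≤ γ := min_le_right _ _
    have hm0 : 0 < min 1 γ := lt_min one_pos hγ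
    nlinarith [abs_nonneg (X i j), abs_nonneg (Y i j)]
  have : 0 < min 1 γ * |W i j| := by
    have := abs_pos.mpr hij
    have := lt_min one_pos hγ
    positivity
  linarith

lemma holder (hγ : 0 < γ) [Nonempty (Fin m)] [Nonempty (Fin n)]
    (W Z : Matrix (Fin m) (Fin n) ℝ) :
    matInner W Z ≤ rho γ W * max (matSpectralNorm Z) (maxNorm Z / γ) := by
  obtain ⟨X, Y, hXY, e, -⟩ := rho_attained hγ W
  set σ := max (matSpectralNorm Z) (maxNorm Z / γ) with hσ
  have h1 : matSpectralNorm Z ≤ σ := le_max_left _ _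
  have h2 : maxNorm Z ≤ γ * σ := by
    rw [show maxNorm Z = γ * (maxNorm Z / γ) from by field_simp]
    have := le_max_right (matSpectralNorm Z) (maxNorm Z / γ)
    nlinarith
  have hinner : matInner W Z = matInner X Z + matInner Y Z := by
    rw [← hXY, matInner_add_left]
  rw [hinner, e]
  have hX := matInner_le_N_mul X Z
  have hY := matInner_le_l1_maxNorm Y Z
  nlinarith [N_nonneg X, l1_nonneg Y]

end Rho

section Dual
variable {m n : ℕ} {γ : ℝ}

lemma N_zero : N (0 : Matrix (Fin m) (Fin n) ℝ) = 0 := by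
  apply le_antisymm
  · have := N_le_l1 (0 : Matrix (Fin m) (Fin n) ℝ)
    simpa [l1Norm] using this
  · exact N_nonneg 0

lemma l1_zero : l1Norm (0 : Matrix (Fin m) (Fin n) ℝ) = 0 := by simp [l1Norm]

lemma l1_stdBasisMatrix (i : Fin m) (j : Fin n) (c : ℝ) :
    l1Norm (Matrix.single i j c) = |c| := by
  unfold l1Norm
  rw [Finset.sum_eq_single i, Finset.sum_eq_single j]
  · simp [Matrix.single]
  · intro j' _ hj'; simp [Matrix.single, hj'.symm]
  · intro h; exact absurd (Finset.mem_univ j) h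
  · intro i' _ hi'
    rw [Finset.sum_eq_zero]; intro j' _; simp [Matrix.single, hi'.symm]
  · intro h; exact absurd (Finset.mem_univ i) h

lemma rho_le_N (hγ : 0 < γ) (X : Matrix (Fin m) (Fin n) ℝ) : rho γ X ≤ N X := by
  have := rho_le (W := X) (X := X) (Y := 0) hγ (add_zero X)
  rwa [l1_zero, mul_zero, add_zero] at this

lemma rho_le_l1 (hγ : 0 < γ) (Y : Matrix (Fin m) (Fin n) ℝ) : rho γ Y ≤ γ * l1Norm Y := by
  have := rho_le (W := Y) (X := 0) (Y := Y) hγ (zero_add Y)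
  rwa [N_zero, zero_add] at this

lemma dual_exists [Nonempty (Fin m)] [Nonempty (Fin n)] (hγ : 0 < γ)
    {M : Matrix (Fin m) (Fin n) ℝ} (hM : M ≠ 0) :
    ∃ Z₀ : Matrix (Fin m) (Fin n) ℝ,
      matInner M Z₀ = rho γ M ∧ matSpectralNorm Z₀ ≤ 1 ∧ maxNorm Z₀ ≤ γ := by
  -- Hahn–Banach extension of t•M ↦ t•ρ(M) dominated by ρ
  set f : Matrix (Fin m) (Fin n) ℝ →ₗ.[ℝ] ℝ :=
    LinearPMap.mkSpanSingleton M (rho γ M) hM with hf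
  have hdom : ∀ x : f.domain, f x ≤ rho γ (x : Matrix (Fin m) (Fin n) ℝ) := by
    rintro ⟨x, hx⟩
    obtain ⟨c, hc⟩ := Submodule.mem_span_singleton.mp hx
    have hx' : (⟨x, hx⟩ : f.domain) = ⟨c • M, by rw [hc]; exact hx⟩ := by
      exact Subtype.ext hc.symm
    rw [hx']
    have happ : f ⟨c • M, by rw [hc]; exact hx⟩ = c • (rho γ M) :=
      LinearPMap.mkSpanSingleton'_apply _ _ _ c _
    rw [happ]
    simp only [smul_eq_mul]
    rcases lt_trichotomy c 0 with h | h | h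
    · have h1 : c * rho γ M ≤ 0 := by nlinarith [rho_nonneg hγ M]
      exact h1.trans (rho_nonneg hγ (c • M))
    · subst h
      simpa using rho_nonneg hγ ((0:ℝ) • M)
    · rw [rho_smul_pos hγ h]
  obtain ⟨g, hg1, hg2⟩ := exists_extension_of_le_sublinear f (rho γ)
    (fun c hc x => rho_smul_pos hγ hc x) (rho_add_le hγ) hdom
  have hgM : g M = rho γ M := by
    have h := hg1 ⟨M, Submodule.mem_span_singleton_self M⟩
    exact h.trans (LinearPMap.mkSpanSingleton_apply ℝ ℝ hM (rho γ M))
  set Z₀ : Matrix (Fin m) (Fin n) ℝ :=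
    Matrix.of (fun i j => g (Matrix.single i j 1)) with hZ₀
  have hrepr : ∀ W : Matrix (Fin m) (Fin n) ℝ, matInner W Z₀ = g W := by
    intro W
    conv_rhs => rw [Matrix.matrix_eq_sum_single W]
    rw [map_sum, matInner_eq_sum]
    apply Finset.sum_congr rfl
    intro i _
    rw [map_sum]
    apply Finset.sum_congr rfl
    intro j _
    have : Matrix.single i j (W i j) = (W i j) • Matrix.single i j 1 := by
      rw [Matrix.smul_single, smul_eq_mul, mul_one]
    rw [this, _root_.map_smul, smul_eq_mul]
    rfl
  refine ⟨Z₀, by rw [hrepr, hgM], ?_, ?_⟩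
  · -- spectral norm ≤ 1
    apply spectralNorm_le_of_forall zero_le_one
    intro x
    rw [one_mul]
    set w : EuclideanSpace ℝ (Fin m) := Matrix.toEuclideanLin Z₀ x with hw
    rcases eq_or_lt_of_le (norm_nonneg w) with h0 | hpos
    · rw [← h0]; exact norm_nonneg x
    set u : EuclideanSpace ℝ (Fin m) := ‖w‖⁻¹ • w with hu
    have hunorm : ‖u‖ = 1 := by
      rw [hu, norm_smul, norm_inv, norm_norm, inv_mul_cancel₀ (ne_of_gt hpos)]
    set Wmat : Matrix (Fin m) (Fin n) ℝ := Matrix.of (fun i j => u i * x j) with hWmat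
    have hNW : N Wmat ≤ ‖x‖ := by
      apply N_le_of_forall
      intro Z' hZ'
      have := bilin_le_spectral Z' u x
      rw [matInner_eq_sum]
      calc ∑ i, ∑ j, Wmat i j * Z' i j = ∑ i, ∑ j, u i * (Z' i j * x j) := by
            apply Finset.sum_congr rfl; intro i _
            apply Finset.sum_congr rfl; intro j _
            simp [hWmat]; ring
        _ ≤ matSpectralNorm Z' * (‖u‖ * ‖x‖) := this
        _ ≤ 1 * (1 * ‖x‖) := by
            rw [hunorm]
            have h1 := norm_nonneg x
            nlinarith [spectralNorm_nonneg Z']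
        _ = ‖x‖ := by ring
    have hinner : matInner Wmat Z₀ = ‖w‖ := by
      rw [matInner_eq_sum]
      have hsum : ∑ i, ∑ j, Wmat i j * Z₀ i j = ∑ i, u i * w i := by
        apply Finset.sum_congr rfl
        intro i _
        rw [show w i = ∑ j, Z₀ i j * x j from toEuclideanLin_apply'' Z₀ x i,
          Finset.mul_sum]
        apply Finset.sum_congr rfl
        intro j _
        simp [hWmat]; ring
      rw [hsum]
      have hww : ∑ i, w i * w i = ‖w‖ ^ 2 := by
        have := real_inner_self_eq_norm_sq w
        rw [← this, PiLp.inner_apply]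
        simp [RCLike.inner_apply, sq]
      calc ∑ i, u i * w i = ‖w‖⁻¹ * ∑ i, w i * w i := by
            rw [Finset.mul_sum]
            apply Finset.sum_congr rfl
            intro i _
            simp [hu]; ring
        _ = ‖w‖⁻¹ * ‖w‖ ^ 2 := by rw [hww]
        _ = ‖w‖ := by field_simp
    calc ‖w‖ = matInner Wmat Z₀ := hinner.symm
      _ = g Wmat := hrepr Wmat
      _ ≤ rho γ Wmat := hg2 Wmat
      _ ≤ N Wmat := rho_le_N hγ Wmat
      _ ≤ ‖x‖ := hNW
  · -- max norm ≤ γ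
    apply maxNorm_le
    intro i j
    have hp : Z₀ i j ≤ γ := by
      have h1 : g (Matrix.single i j 1) ≤ rho γ (Matrix.single i j 1) :=
        hg2 _
      have h2 := rho_le_l1 hγ (Matrix.single i j (1:ℝ))
      rw [l1_stdBasisMatrix] at h2
      simp only [abs_one, mul_one] at h2
      calc Z₀ i j = g (Matrix.single i j 1) := rfl
        _ ≤ γ := h1.trans h2
    have hq : -Z₀ i j ≤ γ := by
      have h1 : g (-Matrix.single i j 1) ≤ rho γ (-Matrix.single i j 1) :=
        hg2 _
      have heq : -Matrix.single i j (1:ℝ) = Matrix.single i j (-1:ℝ) := by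
        ext i' j'; simp [Matrix.single]; split <;> simp
      have h2 := rho_le_l1 hγ (Matrix.single i j (-1:ℝ))
      rw [l1_stdBasisMatrix] at h2
      simp only [abs_neg, abs_one, mul_one] at h2
      rw [heq] at h1
      have h3 : g (-Matrix.single i j (1:ℝ)) = -Z₀ i j := by
        rw [map_neg]; rfl
      rw [heq] at h3
      rw [h3] at h1
      exact h1.trans h2
    rw [abs_le]
    constructor <;> linarith

end Dual

section SVDA
variable {m n : ℕ}

lemma sum_fin_ite (g : ℕ → ℝ) :
    ∑ i : Fin m, (if (i : ℕ) < n then g i else 0) = ∑ k ∈ Finset.range (min m n), g k := by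
  rw [Fin.sum_univ_eq_sum_range (fun k => if k < n then g k else 0) m]
  rw [Finset.sum_ite, Finset.sum_const_zero, add_zero]
  congr 1
  ext k
  simp [Nat.lt_min, and_comm]

lemma sum_diag_mul (s : ℕ → ℝ) (f : Fin m → Fin n → ℝ) :
    ∑ i : Fin m, ∑ j : Fin n, (if (i : ℕ) = (j : ℕ) then s (i : ℕ) else 0) * f i j
      = ∑ i : Fin m, (if h : (i : ℕ) < n then s (i : ℕ) * f i ⟨(i : ℕ), h⟩ else 0) := by
  apply Finset.sum_congr rfl
  intro i _
  by_cases h : (i : ℕ) < n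
  · rw [dif_pos h, Finset.sum_eq_single (⟨(i : ℕ), h⟩ : Fin n)]
    · simp
    · intro j _ hj
      rw [if_neg, zero_mul]
      intro hij
      apply hj
      exact Fin.ext hij.symm
    · intro hmem; exact absurd (Finset.mem_univ _) hmem
  · rw [dif_neg h, Finset.sum_eq_zero]
    intro j _
    rw [if_neg, zero_mul]
    intro hij
    exact h (hij ▸ j.isLt)

lemma matInner_svdDiag (s : ℕ → ℝ) (W : Matrix (Fin m) (Fin n) ℝ) :
    matInner (svdDiagMat m n s) W
      = ∑ i : Fin m, (if h : (i : ℕ) < n then s (i : ℕ) * W i ⟨(i : ℕ), h⟩ else 0) := by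
  rw [matInner_eq_sum]
  exact sum_diag_mul s W

lemma matInner_rot (U : Matrix (Fin m) (Fin m) ℝ) (V : Matrix (Fin n) (Fin n) ℝ)
    (A Z : Matrix (Fin m) (Fin n) ℝ) :
    matInner (U * A * Vᵀ) Z = matInner A (Uᵀ * Z * V) := by
  unfold matInner
  rw [Matrix.transpose_mul, Matrix.transpose_mul, Matrix.transpose_transpose]
  rw [Matrix.mul_assoc V _ Z, Matrix.trace_mul_comm V, Matrix.mul_assoc _ Z V,
    Matrix.mul_assoc Aᵀ Uᵀ (Z * V), Matrix.mul_assoc Uᵀ Z V]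

lemma orth_mulVec_dot {k : ℕ} {U : Matrix (Fin k) (Fin k) ℝ} (hU : Uᵀ * U = 1)
    (y : Fin k → ℝ) : (U *ᵥ y) ⬝ᵥ (U *ᵥ y) = y ⬝ᵥ y := by
  rw [dotProduct_mulVec, ← Matrix.mulVec_transpose, Matrix.mulVec_mulVec, hU,
    Matrix.one_mulVec]

lemma euclid_norm_sq {k : ℕ} (y : EuclideanSpace ℝ (Fin k)) :
    ‖y‖ ^ 2 = ∑ i, y i * y i := by
  rw [← real_inner_self_eq_norm_sq, PiLp.inner_apply]
  simp [RCLike.inner_apply, sq]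

lemma col_norm_one {k : ℕ} {U : Matrix (Fin k) (Fin k) ℝ} (hU : Uᵀ * U = 1) (i : Fin k) :
    ‖((WithLp.equiv 2 (Fin k → ℝ)).symm (fun a => U a i) : EuclideanSpace ℝ (Fin k))‖ = 1 := by
  have h2 : ‖((WithLp.equiv 2 (Fin k → ℝ)).symm (fun a => U a i) : EuclideanSpace ℝ (Fin k))‖ ^ 2
      = 1 := by
    rw [euclid_norm_sq]
    have : ∀ a : Fin k, ((WithLp.equiv 2 (Fin k → ℝ)).symm (fun a => U a i)) a = U a i :=
      fun a => rfl
    simp_rw [this]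
    have := congrArg (fun B => B i i) hU
    simpa [Matrix.mul_apply] using this
  nlinarith [norm_nonneg ((WithLp.equiv 2 (Fin k → ℝ)).symm (fun a => U a i)
    : EuclideanSpace ℝ (Fin k))]

lemma svdDiag_mulVec (s : ℕ → ℝ) (y : Fin n → ℝ) (i : Fin m) :
    (svdDiagMat m n s *ᵥ y) i = if h : (i : ℕ) < n then s (i : ℕ) * y ⟨(i : ℕ), h⟩ else 0 := by
  unfold Matrix.mulVec dotProduct
  by_cases h : (i : ℕ) < n
  · rw [dif_pos h, Finset.sum_eq_single (⟨(i : ℕ), h⟩ : Fin n)]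
    · simp [svdDiagMat]
    · intro j _ hj
      have : ¬((i : ℕ) = (j : ℕ)) := fun hij => hj (Fin.ext hij.symm)
      simp [svdDiagMat, this]
    · intro hmem; exact absurd (Finset.mem_univ _) hmem
  · rw [dif_neg h, Finset.sum_eq_zero]
    intro j _
    have : ¬((i : ℕ) = (j : ℕ)) := fun hij => h (hij ▸ j.isLt)
    simp [svdDiagMat, this]

lemma conj_entry_le_spectral {Z : Matrix (Fin m) (Fin n) ℝ}
    {U : Matrix (Fin m) (Fin m) ℝ} {V : Matrix (Fin n) (Fin n) ℝ}
    (hU : Uᵀ * U = 1) (hV : Vᵀ * V = 1) (i : Fin m) (j : Fin n) :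
    (Uᵀ * Z * V) i j ≤ matSpectralNorm Z := by
  set u : EuclideanSpace ℝ (Fin m) := (WithLp.equiv 2 (Fin m → ℝ)).symm (fun a => U a i)
  set x : EuclideanSpace ℝ (Fin n) := (WithLp.equiv 2 (Fin n → ℝ)).symm (fun b => V b j)
  have hentry : (Uᵀ * Z * V) i j = ∑ a, ∑ b, u a * (Z a b * x b) := by
    rw [Matrix.mul_apply]
    simp_rw [Matrix.mul_apply, Matrix.transpose_apply, Finset.sum_mul]
    rw [Finset.sum_comm]
    apply Finset.sum_congr rfl; intro a _
    apply Finset.sum_congr rfl; intro b _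
    show U a i * Z a b * V b j = u a * (Z a b * x b)
    have h1 : u a = U a i := rfl
    have h2 : x b = V b j := rfl
    rw [h1, h2]; ring
  rw [hentry]
  have hb := bilin_le_spectral Z u x
  rw [col_norm_one hU i, col_norm_one hV j] at hb
  simpa using hb

lemma svd_sum_eq_N {X : Matrix (Fin m) (Fin n) ℝ} {s : ℕ → ℝ} (h : IsOrderedSVD X s) :
    ∑ k ∈ Finset.range (min m n), s k = N X := by
  obtain ⟨hanti, hsnn, hs0, U, V, hUU, hVV, hX⟩ := h
  have hU : Uᵀ * U = 1 := mul_eq_one_comm.mp hUU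
  have hV : Vᵀ * V = 1 := mul_eq_one_comm.mp hVV
  have hub : N X ≤ ∑ k ∈ Finset.range (min m n), s k := by
    apply N_le_of_forall
    intro Z hZ
    rw [hX, matInner_rot, matInner_svdDiag]
    rw [← sum_fin_ite s]
    apply Finset.sum_le_sum
    intro i _
    by_cases hi : (i : ℕ) < n
    · rw [dif_pos hi, if_pos hi]
      have h1 := conj_entry_le_spectral (Z := Z) hU hV i ⟨(i : ℕ), hi⟩
      have h2 := hsnn (i : ℕ)
      nlinarith
    · rw [dif_neg hi, if_neg hi]
  set J : Matrix (Fin m) (Fin n) ℝ := svdDiagMat m n (fun _ => 1) with hJ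
  set Z₁ : Matrix (Fin m) (Fin n) ℝ := U * J * Vᵀ with hZ₁
  have hZ1spec : matSpectralNorm Z₁ ≤ 1 := by
    apply spectralNorm_le_of_forall zero_le_one
    intro x
    rw [one_mul]
    set x' : Fin n → ℝ := fun j => x j with hx'
    have hcoord : ∀ i, Matrix.toEuclideanLin Z₁ x i = (Z₁ *ᵥ x') i := by
      intro i
      rw [toEuclideanLin_apply'']
      unfold Matrix.mulVec dotProduct
      rfl
    have hsq : ‖Matrix.toEuclideanLin Z₁ x‖ ^ 2 = (Z₁ *ᵥ x') ⬝ᵥ (Z₁ *ᵥ x') := by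
      rw [euclid_norm_sq]
      unfold dotProduct
      exact Finset.sum_congr rfl fun i _ => by rw [hcoord i]
    set y : Fin n → ℝ := Vᵀ *ᵥ x' with hy
    have hfact : Z₁ *ᵥ x' = U *ᵥ (J *ᵥ y) := by
      rw [hZ₁, hy, ← Matrix.mulVec_mulVec, ← Matrix.mulVec_mulVec]
    have hstep1 : (Z₁ *ᵥ x') ⬝ᵥ (Z₁ *ᵥ x') = (J *ᵥ y) ⬝ᵥ (J *ᵥ y) := by
      rw [hfact, orth_mulVec_dot hU]
    have hstep2 : (J *ᵥ y) ⬝ᵥ (J *ᵥ y) ≤ y ⬝ᵥ y := by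
      unfold dotProduct
      have hterm : ∀ i : Fin m, (J *ᵥ y) i * (J *ᵥ y) i
          = (if (i : ℕ) < n then (if h : (i : ℕ) < n then y ⟨(i : ℕ), h⟩ * y ⟨(i : ℕ), h⟩
              else 0) else 0) := by
        intro i
        rw [svdDiag_mulVec]
        by_cases h : (i : ℕ) < n
        · rw [dif_pos h, if_pos h, dif_pos h, one_mul]
        · rw [dif_neg h, if_neg h, mul_zero]
      rw [Finset.sum_congr rfl fun i _ => hterm i]
      rw [sum_fin_ite (fun k => if h : k < n then y ⟨k, h⟩ * y ⟨k, h⟩ else 0)]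
      calc ∑ k ∈ Finset.range (min m n), (if h : k < n then y ⟨k, h⟩ * y ⟨k, h⟩ else 0)
          ≤ ∑ k ∈ Finset.range n, (if h : k < n then y ⟨k, h⟩ * y ⟨k, h⟩ else 0) := by
            apply Finset.sum_le_sum_of_subset_of_nonneg
            · exact Finset.range_subset_range.mpr (min_le_right m n)
            · intro k _ _
              by_cases h : k < n
              · rw [dif_pos h]; exact mul_self_nonneg _
              · rw [dif_neg h]
        _ = ∑ j : Fin n, y j * y j := by
            rw [← Fin.sum_univ_eq_sum_range (fun k =>
              if h : k < n then y ⟨k, h⟩ * y ⟨k, h⟩ else 0) n]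
            apply Finset.sum_congr rfl
            intro j _
            rw [dif_pos j.isLt]
    have hstep3 : y ⬝ᵥ y = x' ⬝ᵥ x' := by
      rw [hy]
      have : (Vᵀ)ᵀ * Vᵀ = 1 := by rw [Matrix.transpose_transpose]; exact hVV
      exact orth_mulVec_dot this x'
    have hxnorm : x' ⬝ᵥ x' = ‖x‖ ^ 2 := by
      rw [euclid_norm_sq]; rfl
    have hfinal : ‖Matrix.toEuclideanLin Z₁ x‖ ^ 2 ≤ ‖x‖ ^ 2 := by
      rw [hsq, hstep1, ← hxnorm]
      exact hstep2.trans (le_of_eq hstep3)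
    nlinarith [norm_nonneg (Matrix.toEuclideanLin Z₁ x), norm_nonneg x]
  have hval : matInner X Z₁ = ∑ k ∈ Finset.range (min m n), s k := by
    rw [hX, matInner_rot]
    have hred : Uᵀ * Z₁ * V = J := by
      rw [hZ₁, Matrix.mul_assoc U J Vᵀ, ← Matrix.mul_assoc Uᵀ U (J * Vᵀ), hU, Matrix.one_mul,
        Matrix.mul_assoc J Vᵀ V, hV, Matrix.mul_one]
    rw [hred, matInner_svdDiag, ← sum_fin_ite s]
    apply Finset.sum_congr rfl
    intro i _
    by_cases hi : (i : ℕ) < n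
    · rw [dif_pos hi, if_pos hi]
      have : J i ⟨(i : ℕ), hi⟩ = 1 := by simp [hJ, svdDiagMat]
      rw [this, mul_one]
    · rw [dif_neg hi, if_neg hi]
  have hlb : ∑ k ∈ Finset.range (min m n), s k ≤ N X := by
    rw [← hval]
    exact matInner_le_N hZ1spec
  linarith

end SVDA

section SVDB
variable {m n : ℕ}

lemma exists_isOrderedSVD (X : Matrix (Fin m) (Fin n) ℝ) : ∃ s : ℕ → ℝ, IsOrderedSVD X s := by
  classical
  have hAH : (Xᵀ * X).IsHermitian := Matrix.isHermitian_conjTranspose_mul_self X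
  set lam : Fin n → ℝ := hAH.eigenvalues with hlam
  set B := hAH.eigenvectorBasis with hB
  have hmul : ∀ j, (Xᵀ * X) *ᵥ ⇑(B j) = lam j • ⇑(B j) := fun j => hAH.mulVec_eigenvectorBasis j
  have hBdot : ∀ j k, (⇑(B j) : Fin n → ℝ) ⬝ᵥ ⇑(B k) = if j = k then 1 else 0 := by
    intro j k
    have h := orthonormal_iff_ite.mp B.orthonormal j k
    rw [PiLp.inner_apply] at h
    simp only [RCLike.inner_apply, conj_trivial] at h
    simpa [dotProduct, mul_comm] using h
  have key : ∀ j k : Fin n, (X *ᵥ ⇑(B j)) ⬝ᵥ (X *ᵥ ⇑(B k)) = if j = k then lam j else 0 := by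
    intro j k
    rw [dotProduct_mulVec, ← Matrix.mulVec_transpose, Matrix.mulVec_mulVec, hmul j,
      smul_dotProduct, hBdot j k]
    simp only [smul_eq_mul, mul_ite, mul_one, mul_zero]
  have hlam_nn : ∀ j, 0 ≤ lam j := by
    intro j
    have h := key j j
    rw [if_pos rfl] at h
    rw [← h]
    exact Finset.sum_nonneg fun i _ => mul_self_nonneg _
  set π : Equiv.Perm (Fin n) := Tuple.sort (fun j => -lam j) with hπ
  set μ : Fin n → ℝ := fun l => lam (π l) with hμ
  have hmono : ∀ a b : Fin n, a ≤ b → μ b ≤ μ a := by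
    intro a b hab
    have h := Tuple.monotone_sort (fun j => -lam j) hab
    simp only [Function.comp_apply] at h
    simp only [hμ]
    linarith
  have hμ_nn : ∀ l, 0 ≤ μ l := fun l => hlam_nn _
  -- the (sorted) eigenvectors, as Euclidean vectors, mapped through X
  set Xe : Fin n → EuclideanSpace ℝ (Fin m) :=
    fun a => (WithLp.equiv 2 (Fin m → ℝ)).symm (X *ᵥ ⇑(B (π a))) with hXe
  have hXedot : ∀ a b, (inner ℝ (Xe a) (Xe b) : ℝ) = if a = b then μ a else 0 := by
    intro a b
    rw [PiLp.inner_apply]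
    simp only [RCLike.inner_apply, conj_trivial]
    have h := key (π a) (π b)
    have hco : ∀ i, Xe a i = (X *ᵥ ⇑(B (π a))) i := fun i => rfl
    have hco' : ∀ i, Xe b i = (X *ᵥ ⇑(B (π b))) i := fun i => rfl
    have heq : ∑ i, Xe b i * Xe a i
        = (X *ᵥ ⇑(B (π a))) ⬝ᵥ (X *ᵥ ⇑(B (π b))) := by
      unfold dotProduct
      apply Finset.sum_congr rfl
      intro i _
      rw [hco i, hco' i, mul_comm]
    rw [heq, h]
    by_cases hab : a = b
    · subst hab; simp [hμ]
    · rw [if_neg hab, if_neg (fun hc => hab (π.injective hc))]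
  have htrunc : ∀ l : Fin n, m ≤ (l : ℕ) → μ l = 0 := by
    intro l hl
    by_contra hne
    have hpos : 0 < μ l := lt_of_le_of_ne (hμ_nn l) (Ne.symm hne)
    have hlt : ∀ k : Fin ((l : ℕ) + 1), (k : ℕ) < n := fun k => by
      have := k.isLt
      have := l.isLt
      omega
    have hposk : ∀ k : Fin ((l : ℕ) + 1), 0 < μ ⟨(k : ℕ), hlt k⟩ := by
      intro k
      refine lt_of_lt_of_le hpos (hmono _ l ?_)
      have := k.isLt
      exact Fin.mk_le_mk.mpr (by omega) |>.trans (le_of_eq (Fin.eta l l.isLt))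
    set w : Fin ((l : ℕ) + 1) → EuclideanSpace ℝ (Fin m) := fun k =>
      (Real.sqrt (μ ⟨(k : ℕ), hlt k⟩))⁻¹ • Xe ⟨(k : ℕ), hlt k⟩ with hw
    have horth : Orthonormal ℝ w := by
      rw [orthonormal_iff_ite]
      intro a b
      simp only [hw]
      rw [real_inner_smul_left, real_inner_smul_right, hXedot]
      by_cases hab : a = b
      · subst hab
        rw [if_pos rfl, if_pos rfl]
        have h1 : 0 < μ ⟨(a : ℕ), hlt a⟩ := hposk a
        rw [← Real.sqrt_mul_self (hμ_nn _)]
        field_simp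
        rw [Real.sq_sqrt (Real.sqrt_nonneg _)]
      · have : (⟨(a : ℕ), hlt a⟩ : Fin n) ≠ ⟨(b : ℕ), hlt b⟩ := by
          intro hc
          exact hab (Fin.ext (by simpa using congrArg Fin.val hc))
        rw [if_neg this, if_neg hab]
        ring
    have hcard := horth.linearIndependent.fintype_card_le_finrank
    rw [finrank_euclideanSpace, Fintype.card_fin, Fintype.card_fin] at hcard
    omega
  -- singular values
  set s : ℕ → ℝ := fun k => if h : k < n ∧ k < m then Real.sqrt (μ ⟨k, h.1⟩) else 0 with hs
  have hs_nn : ∀ k, 0 ≤ s k := by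
    intro k
    simp only [hs]
    by_cases h : k < n ∧ k < m
    · rw [dif_pos h]; exact Real.sqrt_nonneg _
    · rw [dif_neg h]
  have hs_anti : Antitone s := by
    intro a b hab
    simp only [hs]
    by_cases hb : b < n ∧ b < m
    · have ha : a < n ∧ a < m := ⟨lt_of_le_of_lt hab hb.1, lt_of_le_of_lt hab hb.2⟩
      rw [dif_pos hb, dif_pos ha]
      exact Real.sqrt_le_sqrt (hmono _ _ (Fin.mk_le_mk.mpr hab))
    · rw [dif_neg hb]
      by_cases ha : a < n ∧ a < m
      · rw [dif_pos ha]; exact Real.sqrt_nonneg _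
      · rw [dif_neg ha]
  have hs_trunc : ∀ k, min m n ≤ k → s k = 0 := by
    intro k hk
    simp only [hs]
    rw [dif_neg]
    omega
  -- V
  set V : Matrix (Fin n) (Fin n) ℝ := Matrix.of (fun i j => B (π j) i) with hV
  have hVo : Vᵀ * V = 1 := by
    ext j k
    rw [Matrix.mul_apply, Matrix.one_apply]
    have : ∑ i, Vᵀ j i * V i k = (⇑(B (π j)) : Fin n → ℝ) ⬝ᵥ ⇑(B (π k)) := by
      apply Finset.sum_congr rfl
      intro i _
      rfl
    rw [this, hBdot]
    by_cases hjk : j = k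
    · subst hjk; simp
    · rw [if_neg (fun hc => hjk (π.injective hc)), if_neg hjk]
  -- U
  set K : Set (Fin m) := {k | ∃ h : (k : ℕ) < n, 0 < μ ⟨(k : ℕ), h⟩} with hK
  set v : Fin m → EuclideanSpace ℝ (Fin m) := fun k =>
    if h : (k : ℕ) < n then (Real.sqrt (μ ⟨(k : ℕ), h⟩))⁻¹ • Xe ⟨(k : ℕ), h⟩ else 0 with hv
  have horthK : Orthonormal ℝ (K.restrict v) := by
    rw [orthonormal_iff_ite]
    rintro ⟨a, ha⟩ ⟨b, hb⟩
    obtain ⟨han, hapos⟩ := ha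
    obtain ⟨hbn, hbpos⟩ := hb
    have hva : K.restrict v ⟨a, ⟨han, hapos⟩⟩
        = (Real.sqrt (μ ⟨(a : ℕ), han⟩))⁻¹ • Xe ⟨(a : ℕ), han⟩ := by
      simp only [Set.restrict_apply, hv]
      exact dif_pos han
    have hvb : K.restrict v ⟨b, ⟨hbn, hbpos⟩⟩
        = (Real.sqrt (μ ⟨(b : ℕ), hbn⟩))⁻¹ • Xe ⟨(b : ℕ), hbn⟩ := by
      simp only [Set.restrict_apply, hv]
      exact dif_pos hbn
    rw [hva, hvb, real_inner_smul_left, real_inner_smul_right, hXedot]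
    by_cases hab : a = b
    · subst hab
      rw [if_pos rfl]
      have := hapos
      rw [if_pos (show (⟨a, ⟨han, hapos⟩⟩ : K) = ⟨a, ⟨han, hapos⟩⟩ from rfl)]
      rw [← Real.sqrt_mul_self (hμ_nn ⟨(a : ℕ), han⟩)]
      field_simp
      rw [Real.sq_sqrt (Real.sqrt_nonneg _)]
    · have h1 : (⟨(a : ℕ), han⟩ : Fin n) ≠ ⟨(b : ℕ), hbn⟩ := by
        intro hc
        exact hab (Fin.ext (by simpa using congrArg Fin.val hc))
      have h2 : (⟨a, ⟨han, hapos⟩⟩ : K) ≠ ⟨b, ⟨hbn, hbpos⟩⟩ := by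
        intro hc
        exact hab (by simpa using congrArg Subtype.val hc)
      rw [if_neg h1, if_neg h2]
      ring
  have hfr : Module.finrank ℝ (EuclideanSpace ℝ (Fin m)) = Fintype.card (Fin m) := by
    rw [finrank_euclideanSpace]
  obtain ⟨β, hβ⟩ := horthK.exists_orthonormalBasis_extension_of_card_eq hfr
  set U : Matrix (Fin m) (Fin m) ℝ := Matrix.of (fun i k => β k i) with hU
  have hUo : Uᵀ * U = 1 := by
    ext k l
    rw [Matrix.mul_apply, Matrix.one_apply]
    have h := orthonormal_iff_ite.mp β.orthonormal k l
    rw [PiLp.inner_apply] at h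
    simp only [RCLike.inner_apply, conj_trivial] at h
    have heq : ∑ i, Uᵀ k i * U i l = ∑ i, β k i * β l i := by
      apply Finset.sum_congr rfl
      intro i _
      simp [hU]
    rw [heq]; exact (Finset.sum_congr rfl fun i _ => mul_comm _ _).trans h
  -- main identity
  have hmain : X * V = U * svdDiagMat m n s := by
    ext i l
    have hLHS : (X * V) i l = (X *ᵥ ⇑(B (π l))) i := by
      rw [Matrix.mul_apply]
      unfold Matrix.mulVec dotProduct
      apply Finset.sum_congr rfl
      intro a _
      rfl
    rw [hLHS]
    by_cases hl : (l : ℕ) < m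
    · set k₀ : Fin m := ⟨(l : ℕ), hl⟩ with hk₀
      have hRHS : (U * svdDiagMat m n s) i l = β k₀ i * s (l : ℕ) := by
        rw [Matrix.mul_apply, Finset.sum_eq_single k₀]
        · congr 1
          simp [svdDiagMat, hk₀]
        · intro k _ hk
          have : ¬((k : ℕ) = (l : ℕ)) := fun hc => hk (Fin.ext hc)
          simp [svdDiagMat, this]
        · intro hmem; exact absurd (Finset.mem_univ _) hmem
      rw [hRHS]
      have hln : (l : ℕ) < n := l.isLt
      have heta : (⟨(l : ℕ), hln⟩ : Fin n) = l := Fin.eta l l.isLt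
      have hsl : s (l : ℕ) = Real.sqrt (μ l) := by
        simp only [hs]
        rw [dif_pos ⟨hln, hl⟩]
      by_cases hp : 0 < μ l
      · have hkK : k₀ ∈ K := ⟨hln, by rw [heta]; exact hp⟩
        have hβk : β k₀ = (Real.sqrt (μ l))⁻¹ • Xe l := by
          rw [hβ k₀ hkK]
          have h2 : v k₀ = (Real.sqrt (μ ⟨((k₀ : Fin m) : ℕ), hln⟩))⁻¹
              • Xe ⟨((k₀ : Fin m) : ℕ), hln⟩ := dif_pos hln
          exact h2
        rw [hβk, hsl]
        have hXei : Xe l i = (X *ᵥ ⇑(B (π l))) i := rfl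
        have hsne : Real.sqrt (μ l) ≠ 0 := by
          rw [Real.sqrt_ne_zero' ]
          exact hp
        rw [PiLp.smul_apply, hXei, smul_eq_mul]
        field_simp
      · have hp0 : μ l = 0 := le_antisymm (not_lt.mp hp) (hμ_nn l)
        have hvec : X *ᵥ ⇑(B (π l)) = 0 := by
          rw [← dotProduct_self_eq_zero (v := X *ᵥ ⇑(B (π l)))]
          rw [key (π l) (π l), if_pos rfl]
          exact hp0
        rw [hvec]
        rw [hsl, hp0, Real.sqrt_zero, mul_zero]
        rfl
    · have hRHS : (U * svdDiagMat m n s) i l = 0 := by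
        rw [Matrix.mul_apply, Finset.sum_eq_zero]
        intro k _
        have : ¬((k : ℕ) = (l : ℕ)) := by
          have := k.isLt
          omega
        simp [svdDiagMat, this]
      rw [hRHS]
      have hp0 : μ l = 0 := htrunc l (not_lt.mp hl)
      have hvec : X *ᵥ ⇑(B (π l)) = 0 := by
        rw [← dotProduct_self_eq_zero (v := X *ᵥ ⇑(B (π l)))]
        rw [key (π l) (π l), if_pos rfl]
        exact hp0
      rw [hvec]
      rfl
  refine ⟨s, hs_anti, hs_nn, hs_trunc, U, V, mul_eq_one_comm.mp hUo,
    mul_eq_one_comm.mp hVo, ?_⟩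
  calc X = X * (V * Vᵀ) := by rw [mul_eq_one_comm.mp hVo, Matrix.mul_one]
    _ = (X * V) * Vᵀ := by rw [Matrix.mul_assoc]
    _ = U * svdDiagMat m n s * Vᵀ := by rw [hmain]

end SVDB
end RPCA


/-- nuclearNorm agrees with the dual characterisation. -/
lemma RPCA.nuclearNorm_eq_N {m n : ℕ} (X : Matrix (Fin m) (Fin n) ℝ) :
    nuclearNorm X = RPCA.N X := by
  obtain ⟨s, hsvd⟩ := RPCA.exists_isOrderedSVD X
  have hset : {t : ℝ | ∃ s : ℕ → ℝ, IsOrderedSVD X s ∧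
      t = ∑ i ∈ Finset.range (min m n), s i} = {RPCA.N X} := by
    ext t
    simp only [Set.mem_setOf_eq, Set.mem_singleton_iff]
    constructor
    · rintro ⟨s', h', rfl⟩
      exact RPCA.svd_sum_eq_N h'
    · rintro rfl
      exact ⟨s, hsvd, (RPCA.svd_sum_eq_N hsvd).symm⟩
  unfold nuclearNorm
  rw [hset, csSup_singleton]

/-- Strong gauge duality for robust PCA: both the primal and the gauge dual attain their
optimal values, and the product of the two optimal values equals 1. -/
theorem rpca_strong_duality {m n : ℕ} (M : Matrix (Fin m) (Fin n) ℝ) (hM : M ≠ 0)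
    (γ : ℝ) (hγ : 0 < γ) :
    (∃ X Y : Matrix (Fin m) (Fin n) ℝ, X + Y = M ∧
      ∀ X' Y' : Matrix (Fin m) (Fin n) ℝ, X' + Y' = M →
        nuclearNorm X + γ * l1Norm Y ≤ nuclearNorm X' + γ * l1Norm Y') ∧
    (∃ Z : Matrix (Fin m) (Fin n) ℝ, 1 ≤ matInner M Z ∧
      ∀ Z' : Matrix (Fin m) (Fin n) ℝ, 1 ≤ matInner M Z' →
        max (matSpectralNorm Z) (maxNorm Z / γ) ≤ max (matSpectralNorm Z') (maxNorm Z' / γ)) ∧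
    sInf {t : ℝ | ∃ X Y : Matrix (Fin m) (Fin n) ℝ, X + Y = M ∧
        t = nuclearNorm X + γ * l1Norm Y} *
      sInf {t : ℝ | ∃ Z : Matrix (Fin m) (Fin n) ℝ, 1 ≤ matInner M Z ∧
        t = max (matSpectralNorm Z) (maxNorm Z / γ)} = 1 := by
  classical
  obtain ⟨i₀, j₀, hij⟩ : ∃ i j, M i j ≠ 0 := by
    by_contra h
    push_neg at h
    exact hM (by ext i j; exact h i j)
  haveI : Nonempty (Fin m) := ⟨i₀⟩
  haveI : Nonempty (Fin n) := ⟨j₀⟩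
  have hnuc : ∀ X : Matrix (Fin m) (Fin n) ℝ, nuclearNorm X = RPCA.N X :=
    RPCA.nuclearNorm_eq_N
  set p := RPCA.rho γ M with hp
  have hppos : 0 < p := RPCA.rho_pos hγ hM
  obtain ⟨Xs, Ys, hXYs, hps, hopt⟩ := RPCA.rho_attained hγ M
  obtain ⟨Z₀, hZ₀M, hZ₀spec, hZ₀max⟩ := RPCA.dual_exists hγ hM
  set Zs : Matrix (Fin m) (Fin n) ℝ := p⁻¹ • Z₀ with hZs
  have hZsM : matInner M Zs = 1 := by
    rw [hZs, RPCA.matInner_smul_right, hZ₀M]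
    field_simp
    exact hp.symm
  have hσZs : max (matSpectralNorm Zs) (maxNorm Zs / γ) ≤ p⁻¹ := by
    apply max_le
    · rw [hZs, RPCA.spectralNorm_smul, abs_of_nonneg (inv_nonneg.mpr hppos.le)]
      nlinarith [inv_pos.mpr hppos]
    · rw [hZs, RPCA.maxNorm_smul (inv_nonneg.mpr hppos.le)]
      rw [div_le_iff₀ hγ]
      have h1 : maxNorm Z₀ ≤ γ := hZ₀max
      nlinarith [inv_pos.mpr hppos]
  have hdual_lb : ∀ Z' : Matrix (Fin m) (Fin n) ℝ, 1 ≤ matInner M Z' →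
      p⁻¹ ≤ max (matSpectralNorm Z') (maxNorm Z' / γ) := by
    intro Z' hZ'
    have hh := RPCA.holder hγ M Z'
    rw [← hp] at hh
    have h1 : 1 ≤ p * max (matSpectralNorm Z') (maxNorm Z' / γ) := le_trans hZ' hh
    calc p⁻¹ = p⁻¹ * 1 := (mul_one _).symm
      _ ≤ p⁻¹ * (p * max (matSpectralNorm Z') (maxNorm Z' / γ)) := by
          nlinarith [inv_pos.mpr hppos]
      _ = max (matSpectralNorm Z') (maxNorm Z' / γ) := by field_simp
  refine ⟨⟨Xs, Ys, hXYs, ?_⟩, ⟨Zs, le_of_eq hZsM.symm, ?_⟩, ?_⟩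
  · intro X' Y' h'
    rw [hnuc Xs, hnuc X']
    exact hopt X' Y' h'
  · intro Z' hZ'
    exact le_trans hσZs (hdual_lb Z' hZ')
  · have hset1 : {t : ℝ | ∃ X Y : Matrix (Fin m) (Fin n) ℝ, X + Y = M ∧
        t = nuclearNorm X + γ * l1Norm Y}
        = {t : ℝ | ∃ X Y : Matrix (Fin m) (Fin n) ℝ, X + Y = M ∧
        t = RPCA.N X + γ * l1Norm Y} := by
      ext t
      simp only [Set.mem_setOf_eq]
      constructor
      · rintro ⟨X, Y, h, rfl⟩
        exact ⟨X, Y, h, by rw [hnuc X]⟩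
      · rintro ⟨X, Y, h, rfl⟩
        exact ⟨X, Y, h, by rw [hnuc X]⟩
    have hprim : sInf {t : ℝ | ∃ X Y : Matrix (Fin m) (Fin n) ℝ, X + Y = M ∧
        t = nuclearNorm X + γ * l1Norm Y} = p := by
      rw [hset1]
      rfl
    have hZsmem : max (matSpectralNorm Zs) (maxNorm Zs / γ)
        ∈ {t : ℝ | ∃ Z : Matrix (Fin m) (Fin n) ℝ, 1 ≤ matInner M Z ∧
        t = max (matSpectralNorm Z) (maxNorm Z / γ)} := ⟨Zs, le_of_eq hZsM.symm, rfl⟩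
    have hDbdd : BddBelow {t : ℝ | ∃ Z : Matrix (Fin m) (Fin n) ℝ, 1 ≤ matInner M Z ∧
        t = max (matSpectralNorm Z) (maxNorm Z / γ)} := by
      refine ⟨p⁻¹, ?_⟩
      rintro t ⟨Z', hZ', rfl⟩
      exact hdual_lb Z' hZ'
    have hdual : sInf {t : ℝ | ∃ Z : Matrix (Fin m) (Fin n) ℝ, 1 ≤ matInner M Z ∧
        t = max (matSpectralNorm Z) (maxNorm Z / γ)} = p⁻¹ := by
      apply le_antisymm
      · exact (csInf_le hDbdd hZsmem).trans hσZs
      · apply le_csInf ⟨_, hZsmem⟩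
        rintro t ⟨Z', hZ', rfl⟩
        exact hdual_lb Z' hZ'
    rw [hprim, hdual]
    exact mul_inv_cancel₀ hppos.ne'
end

section
/- Sufficiency of optimality conditions for robust PCA: if (X,Y) and Z satisfy (1) X+Y = M, (2) ⟨M,Z⟩ = 1, (3) ‖Y‖₁‖Z‖_∞ = ⟨Y,Z⟩, (4) σᵢ(X)(‖Z‖₂ − σᵢ(Z)) = 0 for all i, (5) X and Z admit a simultaneous ordered SVD, and (6) ‖Z‖₂ = ‖Z‖_∞/γ, then (X,Y) is optimal for min{‖X‖_* + γ‖Y‖₁ : X+Y = M} and Z is optimal for min{max{‖Z‖₂, ‖Z‖_∞/γ} : ⟨M,Z⟩ ≥ 1}. -/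
open Matrix InnerProductSpace

section helpers

variable {m n : ℕ}

lemma matInner_eq_sum (A B : Matrix (Fin m) (Fin n) ℝ) :
    matInner A B = ∑ i, ∑ j, A i j * B i j := by
  rw [Finset.sum_comm]
  simp [matInner, Matrix.trace, Matrix.mul_apply, Matrix.diag, Matrix.transpose_apply]

lemma matInner_add_left (A B C : Matrix (Fin m) (Fin n) ℝ) :
    matInner (A + B) C = matInner A C + matInner B C := by
  simp [matInner_eq_sum, Matrix.add_apply, add_mul, Finset.sum_add_distrib]

lemma maxNorm_nonneg (Z : Matrix (Fin m) (Fin n) ℝ) : 0 ≤ maxNorm Z :=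
  Real.iSup_nonneg fun _ => Real.iSup_nonneg fun _ => abs_nonneg _

lemma abs_le_maxNorm (Z : Matrix (Fin m) (Fin n) ℝ) (i : Fin m) (j : Fin n) :
    |Z i j| ≤ maxNorm Z := by
  have h1 : |Z i j| ≤ ⨆ j, |Z i j| :=
    le_ciSup (f := fun j => |Z i j|) (Set.Finite.bddAbove (Set.finite_range _)) j
  have h2 : (⨆ j, |Z i j|) ≤ maxNorm Z :=
    le_ciSup (f := fun i => ⨆ j, |Z i j|) (Set.Finite.bddAbove (Set.finite_range _)) i
  exact h1.trans h2

lemma matInner_le_l1_mul_max (Y Z : Matrix (Fin m) (Fin n) ℝ) :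
    matInner Y Z ≤ l1Norm Y * maxNorm Z := by
  rw [matInner_eq_sum, l1Norm, Finset.sum_mul]
  refine Finset.sum_le_sum fun i _ => ?_
  rw [Finset.sum_mul]
  refine Finset.sum_le_sum fun j _ => ?_
  calc Y i j * Z i j ≤ |Y i j * Z i j| := le_abs_self _
    _ = |Y i j| * |Z i j| := abs_mul _ _
    _ ≤ |Y i j| * maxNorm Z :=
      mul_le_mul_of_nonneg_left (abs_le_maxNorm Z i j) (abs_nonneg _)

lemma matSpectralNorm_nonneg (Z : Matrix (Fin m) (Fin n) ℝ) : 0 ≤ matSpectralNorm Z :=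
  norm_nonneg _

lemma dot_mulVec_le_spectral (Z : Matrix (Fin m) (Fin n) ℝ) (u : Fin m → ℝ) (v : Fin n → ℝ)
    (hu : ∑ i, u i ^ 2 = 1) (hv : ∑ j, v j ^ 2 = 1) :
    u ⬝ᵥ Z *ᵥ v ≤ matSpectralNorm Z := by
  set u' : EuclideanSpace ℝ (Fin m) := (WithLp.equiv 2 _).symm u with hu'
  set v' : EuclideanSpace ℝ (Fin n) := (WithLp.equiv 2 _).symm v with hv'
  have hnu : ‖u'‖ = 1 := by
    rw [EuclideanSpace.norm_eq]
    simp only [hu', WithLp.equiv_symm_apply, PiLp.toLp_apply, Real.norm_eq_abs, sq_abs]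
    rw [hu, Real.sqrt_one]
  have hnv : ‖v'‖ = 1 := by
    rw [EuclideanSpace.norm_eq]
    simp only [hv', WithLp.equiv_symm_apply, PiLp.toLp_apply, Real.norm_eq_abs, sq_abs]
    rw [hv, Real.sqrt_one]
  have key : u ⬝ᵥ Z *ᵥ v = ⟪u', Matrix.toEuclideanLin Z v'⟫_ℝ := by
    rw [Matrix.toEuclideanLin_apply]
    simp [PiLp.inner_apply, dotProduct, hu', hv', mul_comm]
  rw [key]
  calc ⟪u', Matrix.toEuclideanLin Z v'⟫_ℝ ≤ ‖u'‖ * ‖Matrix.toEuclideanLin Z v'‖ :=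
        real_inner_le_norm _ _
    _ = ‖(LinearMap.toContinuousLinearMap (Matrix.toEuclideanLin Z)) v'‖ := by
        rw [hnu, one_mul]; rfl
    _ ≤ matSpectralNorm Z * ‖v'‖ := ContinuousLinearMap.le_opNorm _ _
    _ = matSpectralNorm Z := by rw [hnv, mul_one]


section diag

variable {m n : ℕ}

lemma sum_fin_ite {n : ℕ} (k : ℕ) (f : Fin n → ℝ) :
    (∑ j : Fin n, if k = (j : ℕ) then f j else 0) = if h : k < n then f ⟨k, h⟩ else 0 := by
  split
  case isTrue h =>
    rw [Finset.sum_eq_single (⟨k, h⟩ : Fin n)]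
    · simp
    · intro j _ hj
      rw [if_neg]
      intro hc
      exact hj (by ext; simp [← hc])
    · simp
  case isFalse h =>
    apply Finset.sum_eq_zero
    intro j _
    rw [if_neg]
    intro hc
    exact h (hc ▸ j.isLt)

lemma svdDiagMat_mulVec (s : ℕ → ℝ) (z : Fin n → ℝ) (i : Fin m) :
    (svdDiagMat m n s *ᵥ z) i = if h : (i : ℕ) < n then s i * z ⟨i, h⟩ else 0 := by
  simp only [Matrix.mulVec, dotProduct, svdDiagMat, Matrix.of_apply, ite_mul, zero_mul]
  exact sum_fin_ite (i : ℕ) (fun j => s i * z j)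

lemma matInner_diag_left (s : ℕ → ℝ) (W : Matrix (Fin m) (Fin n) ℝ) :
    matInner (svdDiagMat m n s) W
      = ∑ i : Fin m, if h : (i : ℕ) < n then s i * W i ⟨i, h⟩ else 0 := by
  rw [matInner_eq_sum]
  refine Finset.sum_congr rfl fun i _ => ?_
  simp only [svdDiagMat, Matrix.of_apply, ite_mul, zero_mul]
  exact sum_fin_ite (i : ℕ) (fun j => s i * W i j)

/-- Converting a `Fin m` dite-sum into a `range (min m n)` sum. -/
lemma sum_dite_eq_range_min (f : ℕ → ℝ) :
    (∑ i : Fin m, if (i : ℕ) < n then f i else 0)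
      = ∑ k ∈ Finset.range (min m n), f k := by
  rw [Fin.sum_univ_eq_sum_range (fun k => if k < n then f k else 0) m]
  rw [← Finset.sum_subset (Finset.range_subset_range.2 (min_le_left m n))]
  · exact Finset.sum_congr rfl fun k hk => if_pos (lt_of_lt_of_le (Finset.mem_range.1 hk)
      (min_le_right m n))
  · intro k hk hk'
    rw [if_neg]
    simp only [Finset.mem_range, not_lt] at hk hk' ⊢
    omega

lemma matInner_transpose_shift (U : Matrix (Fin m) (Fin m) ℝ) (V : Matrix (Fin n) (Fin n) ℝ)
    (A Z : Matrix (Fin m) (Fin n) ℝ) :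
    matInner (U * A * Vᵀ) Z = matInner A (Uᵀ * Z * V) := by
  unfold matInner
  rw [Matrix.transpose_mul, Matrix.transpose_mul, Matrix.transpose_transpose]
  rw [show V * (Aᵀ * Uᵀ) * Z = V * (Aᵀ * Uᵀ * Z) from by rw [Matrix.mul_assoc],
    Matrix.trace_mul_comm, show Aᵀ * Uᵀ * Z * V = Aᵀ * (Uᵀ * Z * V) from by
      simp only [Matrix.mul_assoc]]

lemma matInner_conj (U : Matrix (Fin m) (Fin m) ℝ) (V : Matrix (Fin n) (Fin n) ℝ)
    (hU : U * Uᵀ = 1) (hV : V * Vᵀ = 1) (A B : Matrix (Fin m) (Fin n) ℝ) :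
    matInner (U * A * Vᵀ) (U * B * Vᵀ) = matInner A B := by
  rw [matInner_transpose_shift]
  have hU' : Uᵀ * U = 1 := mul_eq_one_comm.mp hU
  have hV' : Vᵀ * V = 1 := mul_eq_one_comm.mp hV
  rw [show Uᵀ * (U * B * Vᵀ) * V = Uᵀ * U * (B * (Vᵀ * V)) from by
    simp only [Matrix.mul_assoc], hU', hV', Matrix.one_mul, Matrix.mul_one]

lemma transpose_mul_mul_apply (U : Matrix (Fin m) (Fin m) ℝ) (V : Matrix (Fin n) (Fin n) ℝ)
    (Z : Matrix (Fin m) (Fin n) ℝ) (a : Fin m) (b : Fin n) :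
    (Uᵀ * Z * V) a b = (fun r => U r a) ⬝ᵥ Z *ᵥ (fun c => V c b) := by
  simp only [Matrix.mul_apply, Matrix.transpose_apply, dotProduct, Matrix.mulVec]
  simp only [Finset.sum_mul]
  rw [Finset.sum_comm]
  simp only [dotProduct, Finset.mul_sum]
  refine Finset.sum_congr rfl fun r _ => Finset.sum_congr rfl fun c _ => by ring

lemma col_unit {p : ℕ} (U : Matrix (Fin p) (Fin p) ℝ) (hU : U * Uᵀ = 1) (a : Fin p) :
    ∑ r, U r a ^ 2 = 1 := by
  have hU' : Uᵀ * U = 1 := mul_eq_one_comm.mp hU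
  have := congrFun (congrFun hU' a) a
  simp only [Matrix.mul_apply, Matrix.transpose_apply, Matrix.one_apply_eq] at this
  rw [← this]
  exact Finset.sum_congr rfl fun r _ => (sq (U r a)).symm ▸ rfl

lemma matInner_svd_le (X : Matrix (Fin m) (Fin n) ℝ) (s : ℕ → ℝ) (hs : IsOrderedSVD X s)
    (Z : Matrix (Fin m) (Fin n) ℝ) :
    matInner X Z ≤ (∑ k ∈ Finset.range (min m n), s k) * matSpectralNorm Z := by
  obtain ⟨hmono, hpos, hzero, U, V, hU, hV, hX⟩ := hs
  rw [hX, matInner_transpose_shift, matInner_diag_left]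
  have key : ∀ i : Fin m,
      (if h : (i : ℕ) < n then s i * (Uᵀ * Z * V) i ⟨i, h⟩ else 0)
        ≤ (if (i : ℕ) < n then s i * matSpectralNorm Z else 0) := by
    intro i
    by_cases h : (i : ℕ) < n
    · rw [dif_pos h, if_pos h]
      refine mul_le_mul_of_nonneg_left ?_ (hpos i)
      rw [transpose_mul_mul_apply]
      exact dot_mulVec_le_spectral Z _ _ (col_unit U hU i)
        (col_unit V hV ⟨i, h⟩)
    · rw [dif_neg h, if_neg h]
  calc (∑ i : Fin m, if h : (i : ℕ) < n then s i * (Uᵀ * Z * V) i ⟨i, h⟩ else 0)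
      ≤ ∑ i : Fin m, (if (i : ℕ) < n then s i * matSpectralNorm Z else 0) :=
        Finset.sum_le_sum fun i _ => key i
    _ = ∑ k ∈ Finset.range (min m n), s k * matSpectralNorm Z :=
        sum_dite_eq_range_min (fun k => s k * matSpectralNorm Z)
    _ = (∑ k ∈ Finset.range (min m n), s k) * matSpectralNorm Z := by rw [Finset.sum_mul]

end diag
section nuclear

variable {m n : ℕ}

lemma sum_sq_eq_dot {p : ℕ} (v : Fin p → ℝ) : ∑ i, v i ^ 2 = v ⬝ᵥ v := by
  simp [dotProduct, sq]

lemma orth_mulVec_sq {p : ℕ} (Q : Matrix (Fin p) (Fin p) ℝ) (hQ : Qᵀ * Q = 1)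
    (y : Fin p → ℝ) : ∑ i, (Q *ᵥ y) i ^ 2 = ∑ i, y i ^ 2 := by
  rw [sum_sq_eq_dot, sum_sq_eq_dot]
  rw [Matrix.dotProduct_mulVec, ← Matrix.mulVec_transpose, Matrix.mulVec_mulVec, hQ,
    Matrix.one_mulVec]

lemma diag_mulVec_sq_le (c : ℕ → ℝ) (hc : ∀ k, |c k| ≤ 1) (z : Fin n → ℝ) :
    ∑ i : Fin m, (svdDiagMat m n c *ᵥ z) i ^ 2 ≤ ∑ j, z j ^ 2 := by
  set g : ℕ → ℝ := fun k => if h : k < n then z ⟨k, h⟩ ^ 2 else 0 with hg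
  have hgnn : ∀ k, 0 ≤ g k := by
    intro k; rw [hg]; dsimp only
    split
    · exact sq_nonneg _
    · exact le_refl 0
  have step1 : ∑ i : Fin m, (svdDiagMat m n c *ᵥ z) i ^ 2 ≤ ∑ i : Fin m, g (i : ℕ) := by
    refine Finset.sum_le_sum fun i _ => ?_
    rw [svdDiagMat_mulVec, hg]; dsimp only
    by_cases h : (i : ℕ) < n
    · rw [dif_pos h, dif_pos h, mul_pow]
      calc c (i : ℕ) ^ 2 * z ⟨i, h⟩ ^ 2 ≤ 1 * z ⟨i, h⟩ ^ 2 := by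
            refine mul_le_mul_of_nonneg_right ?_ (sq_nonneg _)
            rw [← sq_abs]
            exact pow_le_one₀ (abs_nonneg _) (hc _)
        _ = z ⟨i, h⟩ ^ 2 := one_mul _
    · rw [dif_neg h, dif_neg h]
      norm_num
  have step2 : ∑ i : Fin m, g (i : ℕ) ≤ ∑ j : Fin n, z j ^ 2 := by
    rw [Fin.sum_univ_eq_sum_range g m]
    have hsub : ∑ k ∈ Finset.range m, g k = ∑ k ∈ Finset.range (min m n), g k := by
      refine (Finset.sum_subset (Finset.range_subset_range.2 (min_le_left m n)) ?_).symm
      intro k hk hk'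
      simp only [Finset.mem_range] at hk hk'
      rw [hg]; dsimp only
      rw [dif_neg]; omega
    rw [hsub]
    have h2 : ∑ j : Fin n, z j ^ 2 = ∑ k ∈ Finset.range n, g k := by
      rw [← Fin.sum_univ_eq_sum_range g n]
      refine Finset.sum_congr rfl fun j _ => ?_
      rw [hg]; dsimp only
      rw [dif_pos j.isLt]
    rw [h2]
    exact Finset.sum_le_sum_of_subset_of_nonneg
      (Finset.range_subset_range.2 (min_le_right m n)) (fun k _ _ => hgnn k)
  exact step1.trans step2

end nuclear
lemma spectral_conj_le_one {m n : ℕ} (U : Matrix (Fin m) (Fin m) ℝ)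
    (V : Matrix (Fin n) (Fin n) ℝ) (hU : U * Uᵀ = 1) (hV : V * Vᵀ = 1)
    (c : ℕ → ℝ) (hc : ∀ k, |c k| ≤ 1) :
    matSpectralNorm (U * svdDiagMat m n c * Vᵀ) ≤ 1 := by
  set W := U * svdDiagMat m n c * Vᵀ with hW
  refine ContinuousLinearMap.opNorm_le_bound _ zero_le_one fun x => ?_
  rw [one_mul]
  have happ : (LinearMap.toContinuousLinearMap (Matrix.toEuclideanLin W)) x
      = Matrix.toEuclideanLin W x := rfl
  rw [happ, Matrix.toEuclideanLin_apply, EuclideanSpace.norm_eq, EuclideanSpace.norm_eq]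
  apply Real.sqrt_le_sqrt
  simp only [WithLp.equiv_symm_apply, PiLp.toLp_apply, Real.norm_eq_abs, sq_abs]
  set y : Fin n → ℝ := (WithLp.equiv 2 (Fin n → ℝ)) x with hy
  have hsum : ∀ i, x i = y i := fun i => rfl
  have hWy : W *ᵥ y = U *ᵥ (svdDiagMat m n c *ᵥ (Vᵀ *ᵥ y)) := by
    rw [hW, ← Matrix.mulVec_mulVec, ← Matrix.mulVec_mulVec]
  calc ∑ i, (W *ᵥ y) i ^ 2 = ∑ i, (U *ᵥ (svdDiagMat m n c *ᵥ (Vᵀ *ᵥ y))) i ^ 2 := by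
        rw [hWy]
    _ = ∑ i, (svdDiagMat m n c *ᵥ (Vᵀ *ᵥ y)) i ^ 2 :=
        orth_mulVec_sq U (mul_eq_one_comm.mp hU) _
    _ ≤ ∑ j, (Vᵀ *ᵥ y) j ^ 2 := diag_mulVec_sq_le c hc _
    _ = ∑ j, y j ^ 2 := by
        refine orth_mulVec_sq Vᵀ ?_ y
        rw [Matrix.transpose_transpose]
        exact hV
    _ = ∑ j, x j ^ 2 := by simp [hsum]

lemma sum_svd_le {m n : ℕ} (X : Matrix (Fin m) (Fin n) ℝ) (s t : ℕ → ℝ)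
    (hs : IsOrderedSVD X s) (ht : IsOrderedSVD X t) :
    ∑ k ∈ Finset.range (min m n), s k ≤ ∑ k ∈ Finset.range (min m n), t k := by
  obtain ⟨-, hspos, -, U, V, hU, hV, hX⟩ := hs
  set c : ℕ → ℝ := fun k => if k < min m n then 1 else 0 with hcdef
  have hc : ∀ k, |c k| ≤ 1 := by
    intro k; rw [hcdef]; dsimp only; split <;> norm_num
  set W := U * svdDiagMat m n c * Vᵀ with hWdef
  have e1 : matInner X W = ∑ k ∈ Finset.range (min m n), s k := by
    rw [hX, hWdef, matInner_conj U V hU hV, matInner_diag_left]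
    have : ∀ i : Fin m,
        (if h : (i : ℕ) < n then s i * svdDiagMat m n c i ⟨i, h⟩ else 0)
          = (if (i : ℕ) < n then s i else 0) := by
      intro i
      by_cases h : (i : ℕ) < n
      · rw [dif_pos h, if_pos h]
        have : svdDiagMat m n c i ⟨i, h⟩ = 1 := by
          simp only [svdDiagMat, Matrix.of_apply, hcdef]
          rw [if_pos trivial, if_pos (lt_min i.isLt h)]
        rw [this, mul_one]
      · rw [dif_neg h, if_neg h]
    rw [Finset.sum_congr rfl fun i _ => this i]
    exact sum_dite_eq_range_min s
  have e2 : matInner X W ≤ (∑ k ∈ Finset.range (min m n), t k) * matSpectralNorm W :=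
    matInner_svd_le X t ht W
  have e3 : matSpectralNorm W ≤ 1 := spectral_conj_le_one U V hU hV c hc
  have htnn : 0 ≤ ∑ k ∈ Finset.range (min m n), t k :=
    Finset.sum_nonneg fun k _ => ht.2.1 k
  calc ∑ k ∈ Finset.range (min m n), s k = matInner X W := e1.symm
    _ ≤ (∑ k ∈ Finset.range (min m n), t k) * matSpectralNorm W := e2
    _ ≤ (∑ k ∈ Finset.range (min m n), t k) * 1 := mul_le_mul_of_nonneg_left e3 htnn
    _ = _ := mul_one _

lemma nuclearNorm_eq {m n : ℕ} (X : Matrix (Fin m) (Fin n) ℝ) (s : ℕ → ℝ)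
    (hs : IsOrderedSVD X s) :
    nuclearNorm X = ∑ k ∈ Finset.range (min m n), s k := by
  refine le_antisymm ?_ ?_
  · refine csSup_le ⟨_, s, hs, rfl⟩ ?_
    rintro t ⟨s', hs', rfl⟩
    exact sum_svd_le X s' s hs' hs
  · refine le_csSup ⟨∑ k ∈ Finset.range (min m n), s k, ?_⟩ ⟨s, hs, rfl⟩
    rintro t ⟨s', hs', rfl⟩
    exact sum_svd_le X s' s hs' hs
section exist

lemma sum_fin_ite' {m : ℕ} (k : ℕ) (f : Fin m → ℝ) :
    (∑ a : Fin m, if (a : ℕ) = k then f a else 0) = if h : k < m then f ⟨k, h⟩ else 0 := by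
  rw [show (∑ a : Fin m, if (a : ℕ) = k then f a else 0)
      = ∑ a : Fin m, if k = (a : ℕ) then f a else 0 from
    Finset.sum_congr rfl fun a _ => by
      by_cases h : (a : ℕ) = k
      · rw [if_pos h, if_pos h.symm]
      · rw [if_neg h, if_neg (Ne.symm h)]]
  exact sum_fin_ite k f

lemma submatrix_mul_submatrix {a k b a' b' : ℕ} (A : Matrix (Fin a) (Fin k) ℝ)
    (C : Matrix (Fin k) (Fin b) ℝ) (f : Fin a' → Fin a) (g : Fin b' → Fin b) :
    A.submatrix f id * C.submatrix id g = (A * C).submatrix f g := by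
  ext i j
  simp [Matrix.mul_apply]

lemma isOrderedSVD_transpose {m n : ℕ} (X : Matrix (Fin m) (Fin n) ℝ) (s : ℕ → ℝ)
    (h : IsOrderedSVD X s) : IsOrderedSVD Xᵀ s := by
  obtain ⟨hmono, hpos, hz, U, V, hU, hV, hX⟩ := h
  refine ⟨hmono, hpos, fun i hi => hz i (by rwa [min_comm]), V, U, hV, hU, ?_⟩
  have hD : (svdDiagMat m n s)ᵀ = svdDiagMat n m s := by
    ext j i
    simp only [Matrix.transpose_apply, svdDiagMat, Matrix.of_apply]
    by_cases h : (i : ℕ) = (j : ℕ)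
    · rw [if_pos h, if_pos h.symm, h]
    · rw [if_neg h, if_neg (Ne.symm h)]
  rw [hX]
  rw [Matrix.transpose_mul, Matrix.transpose_mul, Matrix.transpose_transpose, hD,
    Matrix.mul_assoc]

lemma mulVec_dot_mulVec {m n : ℕ} (X : Matrix (Fin m) (Fin n) ℝ) (p q : Fin n → ℝ) :
    (X *ᵥ p) ⬝ᵥ (X *ᵥ q) = p ⬝ᵥ (Xᵀ * X) *ᵥ q := by
  rw [← Matrix.mulVec_mulVec, Matrix.dotProduct_mulVec p, Matrix.vecMul_transpose]

lemma svd_exists_aux {m n : ℕ} (hn : n ≤ m) (X : Matrix (Fin m) (Fin n) ℝ) :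
    ∃ s, IsOrderedSVD X s := by
  classical
  set B := Xᵀ * X with hBdef
  have hBh : B.IsHermitian := by
    have := Matrix.isHermitian_conjTranspose_mul_self X
    rwa [Matrix.conjTranspose_eq_transpose_of_trivial] at this
  have hBpsd : B.PosSemidef := by
    have := Matrix.posSemidef_conjTranspose_mul_self X
    rwa [Matrix.conjTranspose_eq_transpose_of_trivial] at this
  set e : Fin n → ℝ := hBh.eigenvalues with he
  have he_nonneg : ∀ i, 0 ≤ e i := fun i => hBpsd.eigenvalues_nonneg i
  set σ : Equiv.Perm (Fin n) := Tuple.sort (fun i => -(e i)) with hσ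
  have hanti : Antitone (fun i : Fin n => e (σ i)) := by
    intro a b hab
    have h2 := Tuple.monotone_sort (fun i => -(e i)) hab
    simpa using h2
  set V₀ : Matrix (Fin n) (Fin n) ℝ := (hBh.eigenvectorUnitary : Matrix (Fin n) (Fin n) ℝ)
    with hV₀
  have hV₀o : V₀ * V₀ᵀ = 1 := by
    have := (Matrix.mem_unitaryGroup_iff).mp (hBh.eigenvectorUnitary).2
    rwa [Matrix.star_eq_conjTranspose, Matrix.conjTranspose_eq_transpose_of_trivial] at this
  have hV₀o' : V₀ᵀ * V₀ = 1 := mul_eq_one_comm.mp hV₀o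
  have hdiag0 : V₀ᵀ * B * V₀ = Matrix.diagonal e := by
    have := hBh.conjStarAlgAut_star_eigenvectorUnitary
    rw [Unitary.conjStarAlgAut_star_apply, Matrix.star_eq_conjTranspose, Matrix.conjTranspose_eq_transpose_of_trivial] at this
    rw [this]
    congr 1
  set V : Matrix (Fin n) (Fin n) ℝ := V₀.submatrix id ⇑σ with hVdef
  have hVt : Vᵀ = V₀ᵀ.submatrix ⇑σ id := by
    rw [hVdef, Matrix.transpose_submatrix]
  have hVo' : Vᵀ * V = 1 := by
    rw [hVt, hVdef, submatrix_mul_submatrix, hV₀o']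
    exact Matrix.submatrix_one_equiv σ
  have hVo : V * Vᵀ = 1 := mul_eq_one_comm.mp hVo'
  have hdiag : Vᵀ * B * V = Matrix.diagonal (fun j => e (σ j)) := by
    rw [hVt, hVdef, show V₀ᵀ.submatrix ⇑σ id * B = (V₀ᵀ * B).submatrix ⇑σ id from by
      rw [← Matrix.submatrix_id_id B, submatrix_mul_submatrix, Matrix.submatrix_id_id]]
    rw [submatrix_mul_submatrix, hdiag0]
    ext a b
    simp only [Matrix.submatrix_apply, Matrix.diagonal_apply, EmbeddingLike.apply_eq_iff_eq]
  -- the inner products of the images of the columns of V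
  have hBv : ∀ a b : Fin n,
      (X *ᵥ (fun c => V c a)) ⬝ᵥ (X *ᵥ (fun c => V c b)) = if a = b then e (σ a) else 0 := by
    intro a b
    have h1 : (fun r => V r a) ⬝ᵥ B *ᵥ (fun c => V c b) = if a = b then e (σ a) else 0 := by
      have := congrFun (congrFun hdiag a) b
      rw [transpose_mul_mul_apply] at this
      rw [this, Matrix.diagonal_apply]
    rw [← h1, mulVec_dot_mulVec, hBdef]
  -- singular values
  set s : ℕ → ℝ := fun k => if h : k < n then Real.sqrt (e (σ ⟨k, h⟩)) else 0 with hs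
  have hs_nonneg : ∀ k, 0 ≤ s k := by
    intro k; rw [hs]; dsimp only; split
    · exact Real.sqrt_nonneg _
    · exact le_refl 0
  have hs_sq : ∀ (k : ℕ) (h : k < n), s k ^ 2 = e (σ ⟨k, h⟩) := by
    intro k h; rw [hs]; dsimp only; rw [dif_pos h]
    exact Real.sq_sqrt (he_nonneg _)
  have hs_anti : Antitone s := by
    intro a b hab
    rw [hs]; dsimp only
    by_cases hb : b < n
    · have ha : a < n := lt_of_le_of_lt hab hb
      rw [dif_pos ha, dif_pos hb]
      exact Real.sqrt_le_sqrt (hanti (show (⟨a, ha⟩ : Fin n) ≤ ⟨b, hb⟩ from hab))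
    · rw [dif_neg hb]
      split
      · exact Real.sqrt_nonneg _
      · exact le_refl 0
  have hs_zero : ∀ i, min m n ≤ i → s i = 0 := by
    intro i hi
    rw [hs]; dsimp only
    rw [dif_neg]
    rw [min_eq_right hn] at hi
    omega
  -- the orthonormal family of left singular vectors
  set w : Fin m → EuclideanSpace ℝ (Fin m) := fun i =>
    if h : (i : ℕ) < n ∧ s (i : ℕ) ≠ 0 then
      (s (i : ℕ))⁻¹ • ((WithLp.equiv 2 (Fin m → ℝ)).symm (X *ᵥ (fun c => V c ⟨i, h.1⟩)))
    else 0 with hw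
  set S : Set (Fin m) := {i | (i : ℕ) < n ∧ s (i : ℕ) ≠ 0} with hS
  have hwinner : ∀ (i j : Fin m) (hi : i ∈ S) (hj : j ∈ S),
      inner ℝ (w i) (w j) = if i = j then 1 else 0 := by
    intro i j hi hj
    have hi' : (i : ℕ) < n ∧ s (i : ℕ) ≠ 0 := hi
    have hj' : (j : ℕ) < n ∧ s (j : ℕ) ≠ 0 := hj
    rw [hw]; dsimp only
    rw [dif_pos hi', dif_pos hj']
    rw [real_inner_smul_left, real_inner_smul_right]
    have hdot : (inner ℝ ((WithLp.equiv 2 (Fin m → ℝ)).symm (X *ᵥ (fun c => V c ⟨i, hi'.1⟩)))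
        ((WithLp.equiv 2 (Fin m → ℝ)).symm (X *ᵥ (fun c => V c ⟨j, hj'.1⟩))) : ℝ)
        = (X *ᵥ (fun c => V c ⟨i, hi'.1⟩)) ⬝ᵥ (X *ᵥ (fun c => V c ⟨j, hj'.1⟩)) := by
      simp [PiLp.inner_apply, dotProduct]
      exact Finset.sum_congr rfl fun _ _ => mul_comm _ _
    rw [hdot, hBv]
    by_cases hij : i = j
    · subst hij
      rw [if_pos rfl, if_pos rfl]
      have h2 := hs_sq i hi'.1
      have hsne := hi'.2
      field_simp
      rw [← h2]
    · have : (⟨(i : ℕ), hi'.1⟩ : Fin n) ≠ ⟨(j : ℕ), hj'.1⟩ := by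
        intro hc
        apply hij
        have hcc : ((⟨(i : ℕ), hi'.1⟩ : Fin n) : ℕ) = ((⟨(j : ℕ), hj'.1⟩ : Fin n) : ℕ) :=
          congrArg Fin.val hc
        exact Fin.ext hcc
      rw [if_neg this, if_neg hij]
      ring
  have horth : Orthonormal ℝ (S.restrict w) := by
    rw [orthonormal_iff_ite]
    intro i j
    rw [show (S.restrict w) i = w i.val from rfl, show (S.restrict w) j = w j.val from rfl]
    rw [hwinner i.val j.val i.prop j.prop]
    by_cases h : i = j
    · rw [if_pos h, if_pos (by rw [h])]
    · rw [if_neg h, if_neg (fun hc => h (Subtype.ext hc))]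
  obtain ⟨b, hb⟩ := horth.exists_orthonormalBasis_extension_of_card_eq
    (by simp [finrank_euclideanSpace_fin])
  set U : Matrix (Fin m) (Fin m) ℝ := Matrix.of (fun r i => b i r) with hU
  have hUo' : Uᵀ * U = 1 := by
    ext i j
    have : (Uᵀ * U) i j = inner ℝ (b i) (b j) := by
      simp only [Matrix.mul_apply, Matrix.transpose_apply, hU, Matrix.of_apply,
        PiLp.inner_apply, RCLike.inner_apply, conj_trivial]
      exact Finset.sum_congr rfl fun _ _ => mul_comm _ _
    rw [this, orthonormal_iff_ite.mp b.orthonormal i j]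
    rw [Matrix.one_apply]
  have hUo : U * Uᵀ = 1 := mul_eq_one_comm.mp hUo'
  -- the key identity X * V = U * D
  have hXV : X * V = U * svdDiagMat m n s := by
    ext r j
    have hRHS : (U * svdDiagMat m n s) r j
        = b ⟨(j : ℕ), lt_of_lt_of_le j.isLt hn⟩ r * s (j : ℕ) := by
      rw [Matrix.mul_apply]
      rw [show (∑ a : Fin m, U r a * svdDiagMat m n s a j)
          = ∑ a : Fin m, if (a : ℕ) = (j : ℕ) then U r a * s (a : ℕ) else 0 from
        Finset.sum_congr rfl fun a _ => by
          simp only [svdDiagMat, Matrix.of_apply, mul_ite, mul_zero]]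
      rw [sum_fin_ite' (j : ℕ) (fun a => U r a * s (a : ℕ)),
        dif_pos (lt_of_lt_of_le j.isLt hn)]
      rfl
    have hLHS : (X * V) r j = (X *ᵥ (fun c => V c j)) r := by
      simp [Matrix.mul_apply, Matrix.mulVec, dotProduct]
    rw [hRHS, hLHS]
    by_cases hsj : s (j : ℕ) = 0
    · rw [hsj, mul_zero]
      have h0 : (X *ᵥ (fun c => V c j)) ⬝ᵥ (X *ᵥ (fun c => V c j)) = 0 := by
        rw [hBv j j, if_pos rfl,
          show e (σ j) = s (j : ℕ) ^ 2 from (hs_sq (j : ℕ) j.isLt).symm, hsj]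
        norm_num
      have := dotProduct_self_eq_zero.mp h0
      rw [this]
      rfl
    · have hmem : (⟨(j : ℕ), lt_of_lt_of_le j.isLt hn⟩ : Fin m) ∈ S := by
        constructor
        · exact j.isLt
        · exact hsj
      rw [hb _ hmem, hw]; dsimp only
      have hmem' : ((⟨(j : ℕ), lt_of_lt_of_le j.isLt hn⟩ : Fin m) : ℕ) < n
          ∧ s ((⟨(j : ℕ), lt_of_lt_of_le j.isLt hn⟩ : Fin m) : ℕ) ≠ 0 := ⟨j.isLt, hsj⟩
      rw [dif_pos hmem']
      show (X *ᵥ fun c => V c j) r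
        = ((s (j : ℕ))⁻¹ • ((WithLp.equiv 2 (Fin m → ℝ)).symm (X *ᵥ fun c => V c j))) r
            * s (j : ℕ)
      simp only [PiLp.smul_apply, WithLp.equiv_symm_apply, PiLp.toLp_apply, smul_eq_mul]
      field_simp
  refine ⟨s, hs_anti, hs_nonneg, hs_zero, U, V, hUo, hVo, ?_⟩
  calc X = X * (V * Vᵀ) := by rw [hVo, Matrix.mul_one]
    _ = (X * V) * Vᵀ := by rw [Matrix.mul_assoc]
    _ = U * svdDiagMat m n s * Vᵀ := by rw [hXV]

lemma svd_exists {m n : ℕ} (X : Matrix (Fin m) (Fin n) ℝ) : ∃ s, IsOrderedSVD X s := by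
  rcases le_total n m with h | h
  · exact svd_exists_aux h X
  · obtain ⟨s, hs⟩ := svd_exists_aux h Xᵀ
    exact ⟨s, by simpa using isOrderedSVD_transpose Xᵀ s hs⟩

end exist
lemma l1Norm_nonneg {m n : ℕ} (Y : Matrix (Fin m) (Fin n) ℝ) : 0 ≤ l1Norm Y :=
  Finset.sum_nonneg fun _ _ => Finset.sum_nonneg fun _ _ => abs_nonneg _


/-- Sufficiency of the optimality conditions for the robust PCA primal-dual gauge pair. -/
theorem rpca_optimality_sufficient {m n : ℕ} (M : Matrix (Fin m) (Fin n) ℝ) (hM : M ≠ 0)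
    (γ : ℝ) (hγ : 0 < γ)
    (X Y Z : Matrix (Fin m) (Fin n) ℝ) (sX sZ : ℕ → ℝ)
    (hsX : IsOrderedSVD X sX) (hsZ : IsOrderedSVD Z sZ)
    (h1 : X + Y = M)
    (h2 : matInner M Z = 1)
    (h3 : l1Norm Y * maxNorm Z = matInner Y Z)
    (h4 : ∀ i, sX i * (matSpectralNorm Z - sZ i) = 0)
    (h5 : ∃ (U : Matrix (Fin m) (Fin m) ℝ) (V : Matrix (Fin n) (Fin n) ℝ),
      U * Uᵀ = 1 ∧ V * Vᵀ = 1 ∧ X = U * svdDiagMat m n sX * Vᵀ ∧ Z = U * svdDiagMat m n sZ * Vᵀ)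
    (h6 : matSpectralNorm Z = maxNorm Z / γ) :
    (∀ X' Y' : Matrix (Fin m) (Fin n) ℝ, X' + Y' = M →
      nuclearNorm X + γ * l1Norm Y ≤ nuclearNorm X' + γ * l1Norm Y') ∧
    (∀ Z' : Matrix (Fin m) (Fin n) ℝ, 1 ≤ matInner M Z' →
      max (matSpectralNorm Z) (maxNorm Z / γ) ≤ max (matSpectralNorm Z') (maxNorm Z' / γ)) := by
  obtain ⟨U, V, hU, hV, hXe, hZe⟩ := h5
  obtain ⟨α, hα⟩ : ∃ a, matSpectralNorm Z = a := ⟨_, rfl⟩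
  obtain ⟨tX, htX⟩ : ∃ t, (∑ k ∈ Finset.range (min m n), sX k) = t := ⟨_, rfl⟩
  obtain ⟨L, hL⟩ : ∃ l, l1Norm Y = l := ⟨_, rfl⟩
  have htXnn : 0 ≤ tX := htX ▸ Finset.sum_nonneg fun k _ => hsX.2.1 k
  have hLnn : 0 ≤ L := hL ▸ l1Norm_nonneg Y
  -- inner product of X and Z
  have hXZ : matInner X Z = tX * α := by
    rw [hXe, hZe, matInner_conj U V hU hV, matInner_diag_left]
    have hterm : ∀ i : Fin m,
        (if h : (i : ℕ) < n then sX i * svdDiagMat m n sZ i ⟨i, h⟩ else 0)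
          = (if (i : ℕ) < n then sX i * α else 0) := by
      intro i
      by_cases h : (i : ℕ) < n
      · rw [dif_pos h, if_pos h]
        have hd : svdDiagMat m n sZ i ⟨i, h⟩ = sZ (i : ℕ) := by
          simp [svdDiagMat]
        rw [hd]
        have h4' := h4 (i : ℕ)
        rw [hα] at h4'
        nlinarith [h4']
      · rw [dif_neg h, if_neg h]
    rw [Finset.sum_congr rfl fun i _ => hterm i, sum_dite_eq_range_min (fun k => sX k * α),
      ← Finset.sum_mul, htX]
  have hmaxZ : maxNorm Z = γ * α := by
    rw [hα] at h6
    rw [h6]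
    field_simp
  have hsplit : matInner M Z = matInner X Z + matInner Y Z := by
    rw [← h1, matInner_add_left]
  have hkey : 1 = α * (tX + γ * L) := by
    have h3' : matInner Y Z = L * (γ * α) := by rw [← h3, hmaxZ, hL]
    rw [← h2, hsplit, hXZ, h3']
    ring
  have hαpos : 0 < α := by
    rcases lt_or_eq_of_le (show (0:ℝ) ≤ α from hα ▸ matSpectralNorm_nonneg Z) with h | h
    · exact h
    · exfalso
      rw [← h] at hkey
      norm_num at hkey
  have hNX : nuclearNorm X = tX := htX ▸ nuclearNorm_eq X sX hsX
  constructor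
  · intro X' Y' hsum
    obtain ⟨s', hs'⟩ := svd_exists X'
    have hNX' : nuclearNorm X' = ∑ k ∈ Finset.range (min m n), s' k := nuclearNorm_eq X' s' hs'
    have hX'Z : matInner X' Z ≤ nuclearNorm X' * α := by
      rw [hNX', ← hα]
      exact matInner_svd_le X' s' hs' Z
    have hY'Z : matInner Y' Z ≤ l1Norm Y' * (γ * α) := by
      rw [← hmaxZ]
      exact matInner_le_l1_mul_max Y' Z
    have hge : 1 ≤ α * (nuclearNorm X' + γ * l1Norm Y') := by
      have hsp : matInner M Z = matInner X' Z + matInner Y' Z := by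
        rw [← hsum, matInner_add_left]
      calc (1:ℝ) = matInner X' Z + matInner Y' Z := by rw [← h2, hsp]
        _ ≤ nuclearNorm X' * α + l1Norm Y' * (γ * α) := add_le_add hX'Z hY'Z
        _ = α * (nuclearNorm X' + γ * l1Norm Y') := by ring
    rw [hNX, hL]
    have hmul : α * (tX + γ * L) ≤ α * (nuclearNorm X' + γ * l1Norm Y') := by
      calc α * (tX + γ * L) = 1 := hkey.symm
        _ ≤ α * (nuclearNorm X' + γ * l1Norm Y') := hge
    exact le_of_mul_le_mul_left hmul hαpos
  · intro Z' hZ'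
    obtain ⟨β, hβ⟩ : ∃ b, max (matSpectralNorm Z') (maxNorm Z' / γ) = b := ⟨_, rfl⟩
    have h1' : matSpectralNorm Z' ≤ β := hβ ▸ le_max_left _ _
    have h2' : maxNorm Z' ≤ γ * β := by
      have h := hβ ▸ le_max_right (matSpectralNorm Z') (maxNorm Z' / γ)
      calc maxNorm Z' = γ * (maxNorm Z' / γ) := by field_simp
        _ ≤ γ * β := mul_le_mul_of_nonneg_left h (le_of_lt hγ)
    have hXZ' : matInner X Z' ≤ tX * β := by
      calc matInner X Z' ≤ (∑ k ∈ Finset.range (min m n), sX k) * matSpectralNorm Z' :=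
            matInner_svd_le X sX hsX Z'
        _ = tX * matSpectralNorm Z' := by rw [htX]
        _ ≤ tX * β := mul_le_mul_of_nonneg_left h1' htXnn
    have hYZ' : matInner Y Z' ≤ L * (γ * β) := by
      calc matInner Y Z' ≤ l1Norm Y * maxNorm Z' := matInner_le_l1_mul_max Y Z'
        _ = L * maxNorm Z' := by rw [hL]
        _ ≤ L * (γ * β) := mul_le_mul_of_nonneg_left h2' hLnn
    have hsplit' : matInner M Z' = matInner X Z' + matInner Y Z' := by
      rw [← h1, matInner_add_left]
    have hge : 1 ≤ (tX + γ * L) * β := by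
      rw [hsplit'] at hZ'
      calc (1:ℝ) ≤ matInner X Z' + matInner Y Z' := hZ'
        _ ≤ tX * β + L * (γ * β) := add_le_add hXZ' hYZ'
        _ = (tX + γ * L) * β := by ring
    have hmaxeq : max (matSpectralNorm Z) (maxNorm Z / γ) = α := by
      rw [hα, show maxNorm Z / γ = α from by rw [← h6, hα], max_self]
    rw [hmaxeq, hβ]
    have hcpos : 0 < tX + γ * L := by nlinarith [hkey, hαpos]
    have hmul : α * (tX + γ * L) ≤ β * (tX + γ * L) := by
      calc α * (tX + γ * L) = 1 := hkey.symm
        _ ≤ (tX + γ * L) * β := hge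
        _ = β * (tX + γ * L) := by ring
    exact le_of_mul_le_mul_right hmul hcpos

end helpers
end

section
/- SDP optimality conditions: let κ(X) = ⟨C,X⟩ + δ(X | X ⪰ 0) and κ°(Z) = inf{μ ≥ 0 : μC − Z ⪰ 0}. Suppose the gauge dual min{κ°(Aᵀy) : bᵀy ≥ 1} has an optimal solution, the primal optimal value p* = min{κ(X) : AX = b} is positive, and strong duality p*·d* = 1 holds. Then X* and y* are respectively primal and dual optimal if and only if AX* = b, X* ⪰ 0, bᵀy* = 1, and ⟨μ_{y*}C − Aᵀy*, X*⟩ = 0, where μ_{y*} = κ°(Aᵀy*). -/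
open Matrix

/-- κ°(Z) = inf {μ ≥ 0 : μC − Z ⪰ 0}, the polar of κ(X) = ⟨C,X⟩ + δ(X | X ⪰ 0),
with value ⊤ if no such μ exists. -/
noncomputable def sdpPolar {n : ℕ} (C : Matrix (Fin n) (Fin n) ℝ)
    (Z : Matrix (Fin n) (Fin n) ℝ) : EReal :=
  sInf {t : EReal | ∃ μ : ℝ, 0 ≤ μ ∧ t = (μ : EReal) ∧ (μ • C - Z).PosSemidef}

namespace SDPAux

lemma smul_psd {n : ℕ} {C : Matrix (Fin n) (Fin n) ℝ} (hC : C.PosSemidef) {c : ℝ}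
    (hc : 0 ≤ c) : (c • C).PosSemidef := by
  refine PosSemidef.of_dotProduct_mulVec_nonneg ?_ (fun x => ?_)
  · show (c • C)ᴴ = c • C
    rw [conjTranspose_smul, star_trivial, hC.1]
  · rw [smul_mulVec, dotProduct_smul, smul_eq_mul]
    exact mul_nonneg hc (hC.dotProduct_mulVec_nonneg x)

lemma trace_psd_nonneg {n : ℕ} {M : Matrix (Fin n) (Fin n) ℝ} (hM : M.PosSemidef) :
    0 ≤ Matrix.trace M := by
  rw [Matrix.trace]
  apply Finset.sum_nonneg
  intro i _
  have := hM.dotProduct_mulVec_nonneg (Pi.single i 1)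
  simpa [dotProduct, mulVec, Pi.single_apply, Finset.mul_sum] using this

lemma trace_mul_psd_nonneg {n : ℕ} {A B : Matrix (Fin n) (Fin n) ℝ}
    (hA : A.PosSemidef) (hB : B.PosSemidef) : 0 ≤ Matrix.trace (A * B) := by
  obtain ⟨S, hS, hSS⟩ : ∃ S : Matrix (Fin n) (Fin n) ℝ, S.PosSemidef ∧ S * S = B :=
    by open scoped MatrixOrder in exact ⟨CFC.sqrt B, (CFC.sqrt_nonneg B).posSemidef, CFC.sqrt_mul_sqrt_self B hB.nonneg⟩
  have h1 : Matrix.trace (A * B) = Matrix.trace (S * A * S) := by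
    rw [← hSS, ← Matrix.mul_assoc, Matrix.trace_mul_comm, Matrix.mul_assoc]
  rw [h1]
  have : (S * A * S).PosSemidef := by
    have := hA.conjTranspose_mul_mul_same (B := S)
    rwa [hS.1] at this
  exact trace_psd_nonneg this

lemma sdpPolar_nonneg {n : ℕ} (C Z : Matrix (Fin n) (Fin n) ℝ) : 0 ≤ sdpPolar C Z := by
  apply le_sInf
  rintro t ⟨μ, hμ, rfl, -⟩
  exact_mod_cast hμ

lemma sdpPolar_attained {n : ℕ} {C Z : Matrix (Fin n) (Fin n) ℝ} (hC : C.PosSemidef)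
    {c : ℝ} (h : sdpPolar C Z = (c : EReal)) :
    0 ≤ c ∧ (c • C - Z).PosSemidef := by
  have hc0 : 0 ≤ c := by
    have := sdpPolar_nonneg C Z
    rw [h] at this
    exact_mod_cast this
  -- upward closedness
  have hup : ∀ μ μ' : ℝ, (μ • C - Z).PosSemidef → μ ≤ μ' → (μ' • C - Z).PosSemidef := by
    intro μ μ' hpsd hle
    have hEq : μ' • C - Z = (μ • C - Z) + (μ' - μ) • C := by module
    rw [hEq]
    exact hpsd.add (smul_psd hC (by linarith))
  -- the defining set is nonempty
  have hne : ∃ μ : ℝ, 0 ≤ μ ∧ (μ • C - Z).PosSemidef := by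
    by_contra hno
    push_neg at hno
    have hempty : {t : EReal | ∃ μ : ℝ, 0 ≤ μ ∧ t = (μ : EReal) ∧ (μ • C - Z).PosSemidef} = ∅ := by
      ext t
      simp only [Set.mem_setOf_eq, Set.mem_empty_iff_false, iff_false]
      rintro ⟨μ, hμ0, rfl, hpsd⟩
      exact hno μ hμ0 hpsd
    rw [sdpPolar, hempty, sInf_empty] at h
    exact (EReal.coe_lt_top c).ne' h
  -- for every ε > 0, c + ε is in the feasible set
  have hmem : ∀ ε : ℝ, 0 < ε → ((c + ε) • C - Z).PosSemidef := by
    intro ε hε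
    have hlt : sdpPolar C Z < ((c + ε : ℝ) : EReal) := by
      rw [h]
      exact_mod_cast lt_add_of_pos_right c hε
    obtain ⟨t, ht, hlt'⟩ := exists_lt_of_csInf_lt (by
      obtain ⟨μ, hμ0, hpsd⟩ := hne
      exact ⟨(μ : EReal), ⟨μ, hμ0, rfl, hpsd⟩⟩) hlt
    obtain ⟨μ, hμ0, rfl, hpsd⟩ := ht
    have : μ ≤ c + ε := by exact_mod_cast hlt'.le
    exact hup μ (c + ε) hpsd this
  refine ⟨hc0, PosSemidef.of_dotProduct_mulVec_nonneg ?_ ?_⟩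
  · -- Hermitian
    obtain ⟨μ₁, hμ₁0, hpsd₁⟩ := hne
    have hEq : c • C - Z = (μ₁ • C - Z) + (c - μ₁) • C := by module
    have hsm : ((c - μ₁) • C).IsHermitian := by
      show ((c - μ₁) • C)ᴴ = (c - μ₁) • C
      rw [conjTranspose_smul, star_trivial, hC.1]
    rw [hEq]
    exact hpsd₁.1.add hsm
  · -- quadratic form
    intro x
    set Q : ℝ := dotProduct (star x) ((c • C - Z) *ᵥ x) with hQ
    set q : ℝ := dotProduct (star x) (C *ᵥ x) with hq
    have hq0 : 0 ≤ q := hC.dotProduct_mulVec_nonneg x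
    have key : ∀ ε : ℝ, 0 < ε → 0 ≤ Q + ε * q := by
      intro ε hε
      have := (hmem ε hε).dotProduct_mulVec_nonneg x
      have hEq : (c + ε) • C - Z = (c • C - Z) + ε • C := by module
      rw [hEq, add_mulVec, dotProduct_add, smul_mulVec, dotProduct_smul,
        smul_eq_mul] at this
      exact this
    by_contra hQneg
    push_neg at hQneg
    have hq1 : 0 < q + 1 := by linarith
    have hε : 0 < -Q / (q + 1) := div_pos (by linarith) hq1
    have hthis := key (-Q / (q + 1)) hε
    have h3 : (-Q / (q + 1)) * (q + 1) = -Q := div_mul_cancel₀ _ hq1.ne'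
    have h4 : (-Q / (q + 1)) * (q + 1) = (-Q / (q + 1)) * q + (-Q / (q + 1)) := by ring
    linarith

end SDPAux

/-- Optimality conditions for standard-form SDP via gauge duality. Suppose the gauge dual
has an optimal solution, the primal optimal value p* is positive, and strong duality
p*·d* = 1 holds. Then X* and y* are primal-dual optimal iff 𝒜X* = b, X* ⪰ 0, bᵀy* = 1 and
⟨μ_{y*}C − 𝒜ᵀy*, X*⟩ = 0, where (μ_{y*} : EReal) = κ°(𝒜ᵀy*). -/
theorem sdp_gauge_optimality_conditions {n m : ℕ}
    (C : Matrix (Fin n) (Fin n) ℝ) (hC : C.PosSemidef)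
    (A : Matrix (Fin n) (Fin n) ℝ →ₗ[ℝ] (Fin m → ℝ))
    (At : (Fin m → ℝ) →ₗ[ℝ] Matrix (Fin n) (Fin n) ℝ)
    (hadj : ∀ (X : Matrix (Fin n) (Fin n) ℝ) (y : Fin m → ℝ),
      (A X) ⬝ᵥ y = Matrix.trace (At y * X))
    (b : Fin m → ℝ)
    (hdualopt : ∃ y : Fin m → ℝ, 1 ≤ b ⬝ᵥ y ∧
      ∀ y' : Fin m → ℝ, 1 ≤ b ⬝ᵥ y' → sdpPolar C (At y) ≤ sdpPolar C (At y'))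
    (hp : 0 < sInf {t : EReal | ∃ X : Matrix (Fin n) (Fin n) ℝ,
      X.PosSemidef ∧ A X = b ∧ t = ((Matrix.trace (C * X) : ℝ) : EReal)})
    (hstrong : sInf {t : EReal | ∃ X : Matrix (Fin n) (Fin n) ℝ,
        X.PosSemidef ∧ A X = b ∧ t = ((Matrix.trace (C * X) : ℝ) : EReal)} *
      sInf {t : EReal | ∃ y : Fin m → ℝ, 1 ≤ b ⬝ᵥ y ∧ t = sdpPolar C (At y)} = 1)
    (Xstar : Matrix (Fin n) (Fin n) ℝ) (ystar : Fin m → ℝ) :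
    ((Xstar.PosSemidef ∧ A Xstar = b ∧
        (∀ X : Matrix (Fin n) (Fin n) ℝ, X.PosSemidef → A X = b →
          Matrix.trace (C * Xstar) ≤ Matrix.trace (C * X))) ∧
      (1 ≤ b ⬝ᵥ ystar ∧ ∀ y : Fin m → ℝ, 1 ≤ b ⬝ᵥ y →
        sdpPolar C (At ystar) ≤ sdpPolar C (At y)))
    ↔ (A Xstar = b ∧ Xstar.PosSemidef ∧ b ⬝ᵥ ystar = 1 ∧
        ∃ μ : ℝ, (μ : EReal) = sdpPolar C (At ystar) ∧
          Matrix.trace ((μ • C - At ystar) * Xstar) = 0) := by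
  set P : Set EReal := {t : EReal | ∃ X : Matrix (Fin n) (Fin n) ℝ,
      X.PosSemidef ∧ A X = b ∧ t = ((Matrix.trace (C * X) : ℝ) : EReal)} with hP
  set D : Set EReal := {t : EReal | ∃ y : Fin m → ℝ, 1 ≤ b ⬝ᵥ y ∧ t = sdpPolar C (At y)} with hD
  -- basic facts about p = sInf P and d = sInf D
  have h1t : (⊤ : EReal) ≠ 1 := by
    rw [← EReal.coe_one]
    exact (EReal.coe_ne_top 1).symm
  have hd0 : (0 : EReal) ≤ sInf D := by
    apply le_sInf
    rintro t ⟨y, -, rfl⟩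
    exact SDPAux.sdpPolar_nonneg C (At y)
  have hptop : sInf P ≠ ⊤ := by
    intro htop
    rw [htop] at hstrong
    rcases eq_or_lt_of_le hd0 with hd | hd
    · rw [← hd, mul_zero] at hstrong
      exact zero_ne_one hstrong
    · rw [EReal.top_mul_of_pos hd] at hstrong
      exact h1t hstrong
  have hdtop : sInf D ≠ ⊤ := by
    intro htop
    rw [htop, EReal.mul_top_of_pos hp] at hstrong
    exact h1t hstrong
  have hpbot : sInf P ≠ ⊥ := ne_of_gt (lt_trans (by simp) hp)
  have hdbot : sInf D ≠ ⊥ := ne_of_gt (lt_of_lt_of_le (by simp) hd0)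
  set a : ℝ := (sInf P).toReal with ha
  set c : ℝ := (sInf D).toReal with hc
  have hpa : ((a : ℝ) : EReal) = sInf P := EReal.coe_toReal hptop hpbot
  have hdc : ((c : ℝ) : EReal) = sInf D := EReal.coe_toReal hdtop hdbot
  have ha0 : 0 < a := by
    rw [← hpa] at hp
    exact_mod_cast hp
  have hc0 : 0 ≤ c := by
    rw [← hdc] at hd0
    exact_mod_cast hd0
  have hac : a * c = 1 := by
    rw [← hpa, ← hdc, ← EReal.coe_mul] at hstrong
    exact_mod_cast hstrong
  constructor
  · rintro ⟨⟨hXpsd, hAX, hXopt⟩, hyfeas, hyopt⟩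
    -- X* attains the primal value
    have hX1 : ((Matrix.trace (C * Xstar) : ℝ) : EReal) = sInf P := by
      apply le_antisymm
      · apply le_sInf
        rintro t ⟨X, hXp, hAXb, rfl⟩
        exact_mod_cast hXopt X hXp hAXb
      · exact sInf_le ⟨Xstar, hXpsd, hAX, rfl⟩
    have htrCX : Matrix.trace (C * Xstar) = a := by
      have := hX1.trans hpa.symm
      exact_mod_cast this
    -- y* attains the dual value
    have hY1 : sdpPolar C (At ystar) = sInf D := by
      apply le_antisymm
      · apply le_sInf
        rintro t ⟨y, hy, rfl⟩
        exact hyopt y hy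
      · exact sInf_le ⟨ystar, hyfeas, rfl⟩
    have hYc : sdpPolar C (At ystar) = ((c : ℝ) : EReal) := hY1.trans hdc.symm
    obtain ⟨hc0', hpsdc⟩ := SDPAux.sdpPolar_attained hC hYc
    have htr0 : 0 ≤ Matrix.trace ((c • C - At ystar) * Xstar) :=
      SDPAux.trace_mul_psd_nonneg hpsdc hXpsd
    have hAty : Matrix.trace (At ystar * Xstar) = b ⬝ᵥ ystar := by
      rw [← hadj, hAX]
    have hexp : Matrix.trace ((c • C - At ystar) * Xstar)
        = c * Matrix.trace (C * Xstar) - Matrix.trace (At ystar * Xstar) := by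
      rw [Matrix.sub_mul, Matrix.trace_sub, Matrix.smul_mul, Matrix.trace_smul, smul_eq_mul]
    rw [hexp, hAty, htrCX] at htr0
    have hby : b ⬝ᵥ ystar = 1 := le_antisymm (by nlinarith) hyfeas
    refine ⟨hAX, hXpsd, hby, c, hYc.symm, ?_⟩
    rw [hexp, hAty, htrCX, hby]
    nlinarith
  · rintro ⟨hAX, hXpsd, hby, μ, hμ, htr⟩
    have hμ0 : 0 ≤ μ := by
      have := SDPAux.sdpPolar_nonneg C (At ystar)
      rw [← hμ] at this
      exact_mod_cast this
    have hAty : Matrix.trace (At ystar * Xstar) = 1 := by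
      rw [← hadj, hAX, hby]
    have hexp : Matrix.trace ((μ • C - At ystar) * Xstar)
        = μ * Matrix.trace (C * Xstar) - Matrix.trace (At ystar * Xstar) := by
      rw [Matrix.sub_mul, Matrix.trace_sub, Matrix.smul_mul, Matrix.trace_smul, smul_eq_mul]
    rw [hexp, hAty] at htr
    have hμt : μ * Matrix.trace (C * Xstar) = 1 := by linarith
    have hμpos : 0 < μ := by
      rcases lt_or_eq_of_le hμ0 with h | h
      · exact h
      · exfalso; rw [← h, zero_mul] at hμt; exact zero_ne_one hμt
    -- p* ≤ ⟨C, X*⟩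
    have hple : a ≤ Matrix.trace (C * Xstar) := by
      have : sInf P ≤ ((Matrix.trace (C * Xstar) : ℝ) : EReal) :=
        sInf_le ⟨Xstar, hXpsd, hAX, rfl⟩
      rw [← hpa] at this
      exact_mod_cast this
    -- d* ≤ κ°(Aᵀy*) = μ
    have hdle : c ≤ μ := by
      have : sInf D ≤ sdpPolar C (At ystar) := sInf_le ⟨ystar, hby.ge, rfl⟩
      rw [← hdc, ← hμ] at this
      exact_mod_cast this
    have hμa : μ * a = 1 := by nlinarith
    have hμc : μ = c := by nlinarith
    have htrCX : Matrix.trace (C * Xstar) = a := by nlinarith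
    refine ⟨⟨hXpsd, hAX, fun X hXp hAXb => ?_⟩, hby.ge, fun y hy => ?_⟩
    · have : sInf P ≤ ((Matrix.trace (C * X) : ℝ) : EReal) := sInf_le ⟨X, hXp, hAXb, rfl⟩
      rw [← hpa] at this
      have : a ≤ Matrix.trace (C * X) := by exact_mod_cast this
      linarith [htrCX ▸ this]
    · have h1 : sdpPolar C (At ystar) = ((c : ℝ) : EReal) := by
        rw [← hμ, hμc]
      rw [h1, hdc]
      exact sInf_le ⟨y, hy, rfl⟩
end

section
/- SDP primal solution recovery: let y* be optimal for the gauge dual min{κ°(Aᵀy) : bᵀy ≥ 1} with μ_{y*} = κ°(Aᵀy*), and suppose the optimality conditions hold (AX* = b, X* ⪰ 0, bᵀy* = 1, ⟨μ_{y*}C − Aᵀy*, X*⟩ = 0 with μ_{y*}C − Aᵀy* ⪰ 0). If U₂ ∈ ℝ^{n×r} is an orthonormal basis of the null space of μ_{y*}C − Aᵀy*, then X* = U₂ T U₂ᵀ for some symmetric positive semidefinite matrix T of order r. -/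
open Matrix

/-- If the Frobenius inner product of a real matrix with itself vanishes, the matrix is zero. -/
lemma trace_transpose_mul_self_eq_zero {p q : ℕ} {A : Matrix (Fin p) (Fin q) ℝ}
    (h : Matrix.trace (Aᵀ * A) = 0) : A = 0 := by
  have hsum : ∑ j, ∑ i, A i j * A i j = 0 := by
    simpa [Matrix.trace, Matrix.diag, Matrix.mul_apply, Matrix.transpose_apply] using h
  have hsum' : ∀ j ∈ Finset.univ, (∑ i, A i j * A i j : ℝ) = 0 := by
    refine (Finset.sum_eq_zero_iff_of_nonneg ?_).mp hsum
    intro j _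
    exact Finset.sum_nonneg fun i _ => mul_self_nonneg _
  ext i j
  have := (Finset.sum_eq_zero_iff_of_nonneg (fun i _ => mul_self_nonneg (A i j))).mp
    (hsum' j (Finset.mem_univ j)) i (Finset.mem_univ i)
  simpa [mul_self_eq_zero] using this

open scoped MatrixOrder in
/-- If S, X are PSD and trace (S * X) = 0, then S * X = 0. -/
lemma psd_trace_zero_mul_eq_zero {p : ℕ} {S X : Matrix (Fin p) (Fin p) ℝ}
    (hS : S.PosSemidef) (hX : X.PosSemidef) (h : Matrix.trace (S * X) = 0) :
    S * X = 0 := by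
  set S1 := CFC.sqrt S with hS1
  set X1 := CFC.sqrt X with hX1
  have hS1sym : S1ᵀ = S1 := by
    have := (Matrix.nonneg_iff_posSemidef.mp (CFC.sqrt_nonneg S)).isHermitian
    simpa [Matrix.IsHermitian, Matrix.conjTranspose_eq_transpose_of_trivial] using this
  have hX1sym : X1ᵀ = X1 := by
    have := (Matrix.nonneg_iff_posSemidef.mp (CFC.sqrt_nonneg X)).isHermitian
    simpa [Matrix.IsHermitian, Matrix.conjTranspose_eq_transpose_of_trivial] using this
  have hSdef : S1 * S1 = S := CFC.sqrt_mul_sqrt_self S hS.nonneg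
  have hXdef : X1 * X1 = X := CFC.sqrt_mul_sqrt_self X hX.nonneg
  have htr : Matrix.trace ((S1 * X1)ᵀ * (S1 * X1)) = 0 := by
    have : (S1 * X1)ᵀ * (S1 * X1) = X1 * (S1 * S1) * X1 := by
      rw [Matrix.transpose_mul, hS1sym, hX1sym]
      noncomm_ring
    rw [this, hSdef]
    calc Matrix.trace (X1 * S * X1) = Matrix.trace (X1 * X1 * S) :=
          Matrix.trace_mul_cycle X1 S X1
      _ = Matrix.trace (S * (X1 * X1)) := Matrix.trace_mul_comm _ _
      _ = 0 := by rw [hXdef, h]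
  have h0 : S1 * X1 = 0 := trace_transpose_mul_self_eq_zero htr
  calc S * X = S1 * (S1 * X1) * X1 := by rw [← hSdef, ← hXdef]; noncomm_ring
    _ = 0 := by rw [h0]; simp

/-- SDP primal solution recovery: if y* is gauge-dual optimal and the optimality conditions
hold, and U₂ is an orthonormal basis of the null space of μ_{y*}C − 𝒜ᵀy*, then
X* = U₂ T U₂ᵀ for some symmetric PSD matrix T of order r. -/
theorem sdp_primal_recovery {n m r : ℕ}
    (C : Matrix (Fin n) (Fin n) ℝ) (hC : C.PosSemidef)
    (A : Matrix (Fin n) (Fin n) ℝ →ₗ[ℝ] (Fin m → ℝ))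
    (At : (Fin m → ℝ) →ₗ[ℝ] Matrix (Fin n) (Fin n) ℝ)
    (hadj : ∀ (X : Matrix (Fin n) (Fin n) ℝ) (y : Fin m → ℝ),
      (A X) ⬝ᵥ y = Matrix.trace (At y * X))
    (b : Fin m → ℝ) (ystar : Fin m → ℝ)
    (hystar : 1 ≤ b ⬝ᵥ ystar ∧
      ∀ y : Fin m → ℝ, 1 ≤ b ⬝ᵥ y → sdpPolar C (At ystar) ≤ sdpPolar C (At y))
    (μ : ℝ) (hμ : (μ : EReal) = sdpPolar C (At ystar))
    (hS : (μ • C - At ystar).PosSemidef)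
    (Xstar : Matrix (Fin n) (Fin n) ℝ)
    (hfeas : A Xstar = b) (hpsd : Xstar.PosSemidef)
    (hby : b ⬝ᵥ ystar = 1)
    (hcomp : Matrix.trace ((μ • C - At ystar) * Xstar) = 0)
    (U₂ : Matrix (Fin n) (Fin r) ℝ)
    (horth : U₂ᵀ * U₂ = 1)
    (hspan : ∀ v : Fin n → ℝ, (μ • C - At ystar).mulVec v = 0 ↔ ∃ w : Fin r → ℝ,
      U₂.mulVec w = v) :
    ∃ T : Matrix (Fin r) (Fin r) ℝ, T.PosSemidef ∧ Xstar = U₂ * T * U₂ᵀ := by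
  set S := μ • C - At ystar with hSdef
  have hXsym : Xstarᵀ = Xstar := by
    have := hpsd.isHermitian
    simpa [Matrix.IsHermitian, Matrix.conjTranspose_eq_transpose_of_trivial] using this
  have hSX : S * Xstar = 0 := psd_trace_zero_mul_eq_zero hS hpsd hcomp
  -- each column of Xstar is in the kernel of S, hence X = U₂U₂ᵀX
  have hproj : U₂ * U₂ᵀ * Xstar = Xstar := by
    ext i j
    -- the j-th column of Xstar
    set v : Fin n → ℝ := fun k => Xstar k j with hv
    have hker : S.mulVec v = 0 := by
      funext k
      have : (S * Xstar) k j = 0 := by rw [hSX]; rfl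
      simpa [Matrix.mulVec, Matrix.mul_apply, dotProduct, hv] using this
    obtain ⟨w, hw⟩ := (hspan v).mp hker
    have h2 : U₂ᵀ *ᵥ (U₂ *ᵥ w) = w := by
      rw [Matrix.mulVec_mulVec, horth, Matrix.one_mulVec]
    have : (U₂ * U₂ᵀ).mulVec v = v := by
      rw [← hw, ← Matrix.mulVec_mulVec, h2]
    have := congrFun this i
    simpa [Matrix.mulVec, Matrix.mul_apply, dotProduct, hv, Finset.sum_mul,
      Finset.mul_sum, mul_assoc] using this
  have hproj' : Xstar * (U₂ * U₂ᵀ) = Xstar := by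
    have := congrArg Matrix.transpose hproj
    rwa [Matrix.transpose_mul, Matrix.transpose_mul, Matrix.transpose_transpose,
      hXsym] at this
  refine ⟨U₂ᵀ * Xstar * U₂, ?_, ?_⟩
  · have h1 : U₂ᴴ = U₂ᵀ := by ext i j; simp [Matrix.conjTranspose]
    rw [← h1]
    exact hpsd.conjTranspose_mul_mul_same U₂
  · calc Xstar = (U₂ * U₂ᵀ) * Xstar * (U₂ * U₂ᵀ) := by rw [hproj, hproj']
      _ = U₂ * (U₂ᵀ * Xstar * U₂) * U₂ᵀ := by simp only [Matrix.mul_assoc]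
end
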